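/- arXiv:1911.01216 — 4 statements merged into one kernel-verified Lean document; each statement's English description precedes it below -/
import Mathlib

section
/- Let h : ℝ^n → ℝ be continuous, bounded, and periodic with period 1 in each coordinate, and let φ : ℝ^n → ℝ be continuous with compact support. Then as ε → 0⁺, ∫_{ℝ^n} h(x/ε) φ(x) dx converges to (∫_{[0,1]^n} h(s) ds) · ∫_{ℝ^n} φ(x) dx. -/
open MeasureTheory Filter Submodule Pointwise

lemma cube_shift (n : ℕ) (h : (Fin n → ℝ) → ℝ)
    (hh_per : ∀ (x : Fin n → ℝ) (i : Fin n), h (x + Pi.single i 1) = h x) (y : Fin n → ℝ) :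
    ∫ v in Set.Icc (0 : Fin n → ℝ) 1, h (y + v) = ∫ s in Set.Icc (0 : Fin n → ℝ) 1, h s := by
  set b := Pi.basisFun ℝ (Fin n) with hbdef
  set F := ZSpan.fundamentalDomain b with hFdef
  haveI : VAddCommClass (Fin n → ℝ) (↥(span ℤ (Set.range ⇑b))) (Fin n → ℝ) := by
    constructor
    intro a g x
    show a + (↑g + x) = ↑g + (a + x)
    ring
  haveI : MeasurableVAdd (↥(span ℤ (Set.range ⇑b))) (Fin n → ℝ) := by
    constructor
    · intro x
      show Measurable fun c : ↥(span ℤ (Set.range ⇑b)) => (c : Fin n → ℝ) + x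
      exact measurable_subtype_coe.add_const x
  haveI : VAddInvariantMeasure (↥(span ℤ (Set.range ⇑b))) (Fin n → ℝ) volume := by
    constructor
    intro c s hs
    show volume ((fun x => (c : Fin n → ℝ) + x) ⁻¹' s) = volume s
    exact measure_preimage_add volume _ s
  have hFD := ZSpan.isAddFundamentalDomain b (volume : Measure (Fin n → ℝ))
  set P : AddSubgroup (Fin n → ℝ) :=
    { carrier := {v | ∀ x, h (v + x) = h x}
      zero_mem' := by intro x; simp
      add_mem' := by intro u v hu hv x; rw [add_assoc, hu, hv]
      neg_mem' := by
        intro v hv x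
        have := hv (-v + x)
        rw [add_neg_cancel_left] at this
        exact this.symm } with hPdef
  have hper : ∀ v ∈ span ℤ (Set.range ⇑b), ∀ x, h (v + x) = h x := by
    have hle : span ℤ (Set.range ⇑b) ≤ AddSubgroup.toIntSubmodule P := by
      rw [Submodule.span_le]
      rintro _ ⟨i, rfl⟩
      intro x
      have hbi : (b i : Fin n → ℝ) = Pi.single i 1 := by simp [b]
      rw [hbi, add_comm]
      exact hh_per x i
    intro v hv x
    exact hle hv x
  have hae : F =ᵐ[(volume : Measure (Fin n → ℝ))] Set.Icc (0 : Fin n → ℝ) 1 := by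
    rw [hFdef, hbdef, ZSpan.fundamentalDomain_pi_basisFun,
      show ((volume : Measure (Fin n → ℝ))) = Measure.pi fun _ => volume from volume_pi]
    exact MeasureTheory.Measure.univ_pi_Ico_ae_eq_Icc
  have hshift : ∫ v in F, h (y + v) = ∫ s in F, h s := by
    have h2 := hFD.vadd_of_comm (G' := Fin n → ℝ) y
    have hpre : (fun x => y + x) ⁻¹' (y +ᵥ F) = F := by
      ext x
      simp [Set.mem_vadd_set_iff_neg_vadd_mem]
    have h3 : ∫ v in F, h (y + v) = ∫ u in y +ᵥ F, h u := by
      rw [← (measurePreserving_add_left volume y).setIntegral_preimage_emb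
        (measurableEmbedding_addLeft y) h (y +ᵥ F), hpre]
    rw [h3]
    exact h2.setIntegral_eq hFD (fun g x => hper g g.2 x)
  calc ∫ v in Set.Icc (0 : Fin n → ℝ) 1, h (y + v)
      = ∫ v in F, h (y + v) := setIntegral_congr_set hae.symm
    _ = ∫ s in F, h s := hshift
    _ = ∫ s in Set.Icc (0 : Fin n → ℝ) 1, h s := setIntegral_congr_set hae

/-- Weak-* convergence of rapidly oscillating periodic functions to their mean:
if `h` is continuous, bounded and 1-periodic in each coordinate and `φ` is continuous with
compact support, then `∫ h(x/ε) φ(x) dx → (∫_{[0,1]^n} h) ∫ φ` as `ε → 0⁺`. -/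
theorem oscillating_mean_convergence (n : ℕ)
    (h : (Fin n → ℝ) → ℝ) (hh_cont : Continuous h)
    (hh_bdd : ∃ M : ℝ, ∀ x, |h x| ≤ M)
    (hh_per : ∀ (x : Fin n → ℝ) (i : Fin n), h (x + Pi.single i 1) = h x)
    (φ : (Fin n → ℝ) → ℝ) (hφ_cont : Continuous φ) (hφ_supp : HasCompactSupport φ) :
    Tendsto (fun ε : ℝ => ∫ x, h (ε⁻¹ • x) * φ x)
      (nhdsWithin 0 (Set.Ioi 0))
      (nhds ((∫ s in Set.Icc (0 : Fin n → ℝ) 1, h s) * ∫ x, φ x)) := by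
  obtain ⟨M, hM⟩ := hh_bdd
  have hM0 : 0 ≤ M := le_trans (abs_nonneg _) (hM 0)
  obtain ⟨R, hR⟩ := hφ_supp.isBounded.subset_closedBall 0
  set B := Metric.closedBall (0 : Fin n → ℝ) (R + 1) with hBdef
  have hBvol : volume B < ⊤ := (isCompact_closedBall _ _).measure_lt_top
  set volB := (volume B).toReal with hvolBdef
  have hvolB0 : 0 ≤ volB := ENNReal.toReal_nonneg
  set cube := Set.Icc (0 : Fin n → ℝ) 1 with hcube
  have hvol1 : volume cube = 1 := by
    rw [hcube, Real.volume_Icc_pi]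
    simp
  haveI : IsFiniteMeasure (volume.restrict cube) :=
    ⟨by rw [Measure.restrict_apply_univ, hvol1]; exact ENNReal.one_lt_top⟩
  have hφ_int : Integrable φ := hφ_cont.integrable_of_hasCompactSupport hφ_supp
  have hunif := hφ_supp.uniformContinuous_of_continuous hφ_cont
  set mean := ∫ s in cube, h s with hmean
  rw [Metric.tendsto_nhdsWithin_nhds]
  intro δ hδ
  set η := δ / (2 * (M * volB + 1)) with hη
  have hη0 : 0 < η := by positivity
  obtain ⟨r, hr0, hr⟩ := Metric.uniformContinuous_iff.mp hunif η hη0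
  refine ⟨min 1 r, by positivity, ?_⟩
  intro ε hεmem hεd
  have hε0 : 0 < ε := hεmem
  rw [Real.dist_eq, sub_zero, abs_of_pos hε0, lt_min_iff] at hεd
  obtain ⟨hε1, hεr⟩ := hεd
  have hεne : ε ≠ 0 := ne_of_gt hε0
  show dist (∫ x, h (ε⁻¹ • x) * φ x) (mean * ∫ x, φ x) < δ
  set I := ∫ x, h (ε⁻¹ • x) * φ x with hI
  -- integrability of the shifted integrands
  have hint : ∀ w : Fin n → ℝ, Integrable (fun y => h (ε⁻¹ • y) * φ (y - w)) := by
    intro w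
    apply Continuous.integrable_of_hasCompactSupport
    · exact (hh_cont.comp (continuous_const_smul _)).mul
        (hφ_cont.comp (continuous_sub_right w))
    · have : HasCompactSupport fun y => φ (y - w) :=
        hφ_supp.comp_homeomorph (Homeomorph.subRight w)
      exact this.mul_left
  have hint0 : Integrable (fun y => h (ε⁻¹ • y) * φ y) := by
    apply Continuous.integrable_of_hasCompactSupport
    · exact (hh_cont.comp (continuous_const_smul _)).mul hφ_cont
    · exact hφ_supp.mul_left
  -- change of variables in the shifted integral
  have hJ : ∀ v : Fin n → ℝ,
      (∫ y, h (ε⁻¹ • y + v) * φ y) = ∫ y, h (ε⁻¹ • y) * φ (y - ε • v) := by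
    intro v
    have heq := integral_add_right_eq_self (μ := (volume : Measure (Fin n → ℝ)))
      (fun y => h (ε⁻¹ • y) * φ (y - ε • v)) (ε • v)
    rw [← heq]
    congr 1
    ext y
    have h1 : ε⁻¹ • (y + ε • v) = ε⁻¹ • y + v := by
      rw [smul_add, smul_smul, inv_mul_cancel₀ hεne, one_smul]
    rw [h1, add_sub_cancel_right]
  -- uniform bound on I - J v for v in the cube
  have hbound : ∀ v ∈ cube, ‖I - ∫ y, h (ε⁻¹ • y + v) * φ y‖ ≤ M * η * volB := by
    intro v hv
    obtain ⟨hv0, hv1⟩ := Set.mem_Icc.mp hv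
    have hvle : ‖v‖ ≤ 1 := by
      rw [pi_norm_le_iff_of_nonneg zero_le_one]
      intro i
      rw [Real.norm_eq_abs, abs_le]
      constructor
      · have := hv0 i; simp only [Pi.zero_apply] at this; linarith
      · have := hv1 i; simp only [Pi.one_apply] at this; linarith
    set w := ε • v with hw
    have hwnorm : ‖w‖ < r := by
      rw [hw, norm_smul, Real.norm_eq_abs, abs_of_pos hε0]
      calc ε * ‖v‖ ≤ ε * 1 := by nlinarith [norm_nonneg v]
        _ = ε := mul_one ε
        _ < r := hεr
    have hwnorm1 : ‖w‖ ≤ 1 := by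
      rw [hw, norm_smul, Real.norm_eq_abs, abs_of_pos hε0]
      nlinarith [norm_nonneg v]
    rw [hJ v, hI, ← integral_sub hint0 (hint w)]
    have hmulsub : ∀ y : Fin n → ℝ,
        h (ε⁻¹ • y) * φ y - h (ε⁻¹ • y) * φ (y - w) = h (ε⁻¹ • y) * (φ y - φ (y - w)) := by
      intro y; ring
    simp_rw [hmulsub]
    have hzero : ∀ y : Fin n → ℝ, y ∉ B → h (ε⁻¹ • y) * (φ y - φ (y - w)) = 0 := by
      intro y hy
      rw [hBdef, Metric.mem_closedBall, dist_zero_right, not_le] at hy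
      have hy1 : φ y = 0 := by
        apply image_eq_zero_of_notMem_tsupport
        intro hmem
        have := hR hmem
        rw [Metric.mem_closedBall, dist_zero_right] at this
        linarith
      have hy2 : φ (y - w) = 0 := by
        apply image_eq_zero_of_notMem_tsupport
        intro hmem
        have := hR hmem
        rw [Metric.mem_closedBall, dist_zero_right] at this
        have : ‖y‖ ≤ ‖y - w‖ + ‖w‖ := by
          calc ‖y‖ = ‖(y - w) + w‖ := by rw [sub_add_cancel]
            _ ≤ ‖y - w‖ + ‖w‖ := norm_add_le _ _
        linarith
      rw [hy1, hy2, sub_zero, mul_zero]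
    rw [← setIntegral_eq_integral_of_forall_compl_eq_zero hzero]
    have hptbound : ∀ y ∈ B, ‖h (ε⁻¹ • y) * (φ y - φ (y - w))‖ ≤ M * η := by
      intro y _
      rw [norm_mul]
      have h1 : ‖h (ε⁻¹ • y)‖ ≤ M := by rw [Real.norm_eq_abs]; exact hM _
      have h2 : ‖φ y - φ (y - w)‖ ≤ η := by
        rw [Real.norm_eq_abs, ← Real.dist_eq]
        apply le_of_lt
        apply hr
        rw [dist_eq_norm, sub_sub_cancel]
        exact hwnorm
      exact mul_le_mul h1 h2 (norm_nonneg _) hM0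
    calc ‖∫ y in B, h (ε⁻¹ • y) * (φ y - φ (y - w))‖
        ≤ (M * η) * (volume B).toReal :=
          norm_setIntegral_le_of_norm_le_const hBvol hptbound
      _ = M * η * volB := by rw [hvolBdef]
  -- Fubini setup
  have hF2cont : Continuous (Function.uncurry fun v y : Fin n → ℝ => h (ε⁻¹ • y + v) * φ y) := by
    apply Continuous.mul
    · exact hh_cont.comp (((continuous_const_smul _).comp continuous_snd).add continuous_fst)
    · exact hφ_cont.comp continuous_snd
  have hint2 : Integrable (Function.uncurry fun v y : Fin n → ℝ => h (ε⁻¹ • y + v) * φ y)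
      ((volume.restrict cube).prod volume) := by
    have hGint : Integrable (fun z : (Fin n → ℝ) × (Fin n → ℝ) => M * |φ z.2|)
        ((volume.restrict cube).prod volume) :=
      (integrable_const M).mul_prod hφ_int.abs
    refine hGint.mono' hF2cont.aestronglyMeasurable (Filter.Eventually.of_forall ?_)
    rintro ⟨v, y⟩
    simp only [Function.uncurry, Real.norm_eq_abs, abs_mul]
    exact mul_le_mul_of_nonneg_right (hM _) (abs_nonneg _)
  have hJint : Integrable (fun v => ∫ y, h (ε⁻¹ • y + v) * φ y) (volume.restrict cube) :=
    hint2.integral_prod_left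
  -- Fubini: the average of J over the cube is the target
  have hfub : mean * (∫ x, φ x) = ∫ v in cube, ∫ y, h (ε⁻¹ • y + v) * φ y := by
    calc mean * ∫ x, φ x = ∫ y, mean * φ y := (integral_const_mul mean φ).symm
      _ = ∫ y, (∫ v in cube, h (ε⁻¹ • y + v)) * φ y := by
          congr 1
          ext y
          rw [hcube, cube_shift n h hh_per (ε⁻¹ • y), ← hmean]
      _ = ∫ y, ∫ v in cube, h (ε⁻¹ • y + v) * φ y := by
          congr 1
          ext y
          rw [integral_mul_const]
      _ = ∫ v in cube, ∫ y, h (ε⁻¹ • y + v) * φ y := (integral_integral_swap hint2).symm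
  -- put everything together
  have key : I - mean * ∫ x, φ x = ∫ v in cube, (I - ∫ y, h (ε⁻¹ • y + v) * φ y) := by
    rw [integral_sub (integrable_const I) hJint]
    rw [integral_const, measureReal_restrict_apply_univ, Measure.real, hvol1, ENNReal.toReal_one, one_smul, ← hfub]
  rw [dist_eq_norm]
  calc ‖I - mean * ∫ x, φ x‖ = ‖∫ v in cube, (I - ∫ y, h (ε⁻¹ • y + v) * φ y)‖ := by rw [key]
    _ ≤ (M * η * volB) * (volume cube).toReal :=
        norm_setIntegral_le_of_norm_le_const (by rw [hvol1]; exact ENNReal.one_lt_top) hbound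
    _ = M * η * volB := by rw [hvol1, ENNReal.toReal_one, mul_one]
    _ < δ := by
        have h1 : M * η * volB ≤ (M * volB + 1) * η := by nlinarith
        have h2 : (M * volB + 1) * η = δ / 2 := by
          rw [hη]
          field_simp
        linarith
end

section
/- Minty's trick for the p-Laplacian: let Ω ⊂ ℝ^m be a bounded Lipschitz domain, p ≥ 2, u ∈ W^{1,p}(Ω), and let Λ : W^{1,p}(Ω) → ℝ be a continuous linear functional. Suppose that for every v ∈ W^{1,p}(Ω), 0 ≤ Λ(u − v) − ∫_Ω |u|^{p-2} u (u − v) dx − ∫_Ω |∇v|^{p-2} ∇v · (∇u − ∇v) dx. Then for every φ ∈ W^{1,p}(Ω), Λ(φ) = ∫_Ω |u|^{p-2} u φ dx + ∫_Ω |∇u|^{p-2} ∇u · ∇φ dx. -/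
open MeasureTheory Filter
open scoped RealInnerProductSpace

section Aux

variable {m : ℕ}

/-- Gradient of `u - c • φ`. -/
lemma gradient_sub_const_smul {E : Type*} [NormedAddCommGroup E] [InnerProductSpace ℝ E]
    [CompleteSpace E]
    (u φ : E → ℝ) (hu : Differentiable ℝ u) (hφ : Differentiable ℝ φ) (c : ℝ) (x : E) :
    gradient (u - c • φ) x = gradient u x - c • gradient φ x := by
  apply HasGradientAt.gradient
  rw [hasGradientAt_iff_hasFDerivAt]
  have h1 : HasFDerivAt u (InnerProductSpace.toDual ℝ E (gradient u x)) x := by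
    have := (hu x).hasGradientAt
    rwa [hasGradientAt_iff_hasFDerivAt] at this
  have h2 : HasFDerivAt φ (InnerProductSpace.toDual ℝ E (gradient φ x)) x := by
    have := (hφ x).hasGradientAt
    rwa [hasGradientAt_iff_hasFDerivAt] at this
  have h3 : HasFDerivAt (fun y => u y - c • φ y)
      (InnerProductSpace.toDual ℝ E (gradient u x)
        - c • InnerProductSpace.toDual ℝ E (gradient φ x)) x := h1.sub (h2.const_smul c)
  have : InnerProductSpace.toDual ℝ E (gradient u x - c • gradient φ x)
      = InnerProductSpace.toDual ℝ E (gradient u x)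
        - c • InnerProductSpace.toDual ℝ E (gradient φ x) := by
    simp only [map_sub, _root_.map_smul]
  rw [this]
  exact h3

/-- The key limit, by dominated convergence. -/
lemma tendsto_integral_grad {α : Type*} [MeasurableSpace α] {μ : Measure α}
    {E : Type*} [NormedAddCommGroup E] [InnerProductSpace ℝ E]
    (G H : α → E) (p : ℝ) (hp : 2 ≤ p)
    (hG : MemLp G (ENNReal.ofReal p) μ) (hH : MemLp H (ENNReal.ofReal p) μ)
    (c : ℕ → ℝ) (hc0 : Tendsto c atTop (nhds 0)) (hc1 : ∀ n, |c n| ≤ 1) :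
    Tendsto (fun n => ∫ x, ‖G x - c n • H x‖ ^ (p - 2) *
        (inner ℝ (G x - c n • H x) (H x) : ℝ) ∂μ) atTop
      (nhds (∫ x, ‖G x‖ ^ (p - 2) * (inner ℝ (G x) (H x) : ℝ) ∂μ)) := by
  have hp0 : (0:ℝ) < p := by linarith
  have hp2 : (0:ℝ) ≤ p - 2 := by linarith
  have hGm : AEStronglyMeasurable G μ := hG.1
  have hHm : AEStronglyMeasurable H μ := hH.1
  -- the dominating function
  set b : α → ℝ := fun x => ‖‖G x‖ + ‖H x‖‖ ^ p with hb
  have hsum : MemLp (fun x => ‖G x‖ + ‖H x‖) (ENNReal.ofReal p) μ := hG.norm.add hH.norm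
  have hbint : Integrable b μ := by
    have := hsum.integrable_norm_rpow
      (by simp only [ne_eq, ENNReal.ofReal_eq_zero, not_le]; linarith) ENNReal.ofReal_ne_top
    simpa [hb, ENNReal.toReal_ofReal hp0.le] using this
  -- measurability of each term
  have hmeas : ∀ t : ℝ, AEStronglyMeasurable
      (fun x => ‖G x - t • H x‖ ^ (p - 2) * (inner ℝ (G x - t • H x) (H x) : ℝ)) μ := by
    intro t
    have h1 : AEStronglyMeasurable (fun x => G x - t • H x) μ :=
      hGm.sub (hHm.const_smul t)
    have h2 : AEStronglyMeasurable (fun x => ‖G x - t • H x‖ ^ (p - 2)) μ :=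
      (Real.continuous_rpow_const hp2).comp_aestronglyMeasurable h1.norm
    exact h2.mul (h1.inner hHm)
  -- pointwise bound
  have hbound : ∀ (t : ℝ), |t| ≤ 1 → ∀ x,
      ‖‖G x - t • H x‖ ^ (p - 2) * (inner ℝ (G x - t • H x) (H x) : ℝ)‖ ≤ b x := by
    intro t ht x
    set a : ℝ := ‖G x‖ + ‖H x‖ with ha
    have ha0 : 0 ≤ a := by positivity
    have h1 : ‖G x - t • H x‖ ≤ a := by
      calc ‖G x - t • H x‖ ≤ ‖G x‖ + ‖t • H x‖ := norm_sub_le _ _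
        _ ≤ ‖G x‖ + ‖H x‖ := by
            rw [norm_smul]
            have : ‖t‖ * ‖H x‖ ≤ 1 * ‖H x‖ :=
              mul_le_mul_of_nonneg_right (by simpa using ht) (norm_nonneg _)
            simpa using this
    have h2 : ‖G x - t • H x‖ ^ (p - 2) ≤ a ^ (p - 2) :=
      Real.rpow_le_rpow (norm_nonneg _) h1 hp2
    have h3 : |(inner ℝ (G x - t • H x) (H x) : ℝ)| ≤ a * a := by
      calc |(inner ℝ (G x - t • H x) (H x) : ℝ)| ≤ ‖G x - t • H x‖ * ‖H x‖ :=
            abs_real_inner_le_norm _ _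
        _ ≤ a * a := by
            apply mul_le_mul h1 _ (norm_nonneg _) ha0
            rw [ha]
            linarith [norm_nonneg (G x)]
    calc ‖‖G x - t • H x‖ ^ (p - 2) * (inner ℝ (G x - t • H x) (H x) : ℝ)‖
        = ‖G x - t • H x‖ ^ (p - 2) * |(inner ℝ (G x - t • H x) (H x) : ℝ)| := by
          rw [Real.norm_eq_abs, abs_mul]
          congr 1
          exact abs_of_nonneg (Real.rpow_nonneg (norm_nonneg _) _)
      _ ≤ a ^ (p - 2) * (a * a) := by
          apply mul_le_mul h2 h3 (abs_nonneg _) (Real.rpow_nonneg ha0 _)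
      _ = b x := by
          have hbx : b x = a ^ p := by
            simp only [hb, ha]
            rw [Real.norm_eq_abs, abs_of_nonneg (by positivity)]
          rw [hbx]
          have hsplit : a ^ p = a ^ (p - 2) * a ^ (2:ℝ) := by
            rw [← Real.rpow_add' ha0 (by intro h; linarith : p - 2 + 2 ≠ 0)]
            · norm_num
          rw [hsplit]
          have h2a : a ^ (2:ℝ) = a * a := by
            rw [show (2:ℝ) = ((2:ℕ):ℝ) by norm_num, Real.rpow_natCast]; ring
          rw [h2a]
  -- apply dominated convergence
  apply tendsto_integral_filter_of_dominated_convergence b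
  · exact Eventually.of_forall fun n => hmeas (c n)
  · exact Eventually.of_forall fun n =>
      Eventually.of_forall fun x => hbound (c n) (hc1 n) x
  · exact hbint
  · refine Eventually.of_forall fun x => ?_
    have hcont : ContinuousAt
        (fun t : ℝ => ‖G x - t • H x‖ ^ (p - 2) * (inner ℝ (G x - t • H x) (H x) : ℝ)) 0 := by
      have h1 : Continuous (fun t : ℝ => G x - t • H x) := by continuity
      have h2 : Continuous (fun t : ℝ => ‖G x - t • H x‖ ^ (p - 2)) :=
        (Real.continuous_rpow_const hp2).comp h1.norm
      have h3 : Continuous (fun t : ℝ => (inner ℝ (G x - t • H x) (H x) : ℝ)) :=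
        h1.inner continuous_const
      exact (h2.mul h3).continuousAt
    have := hcont.tendsto.comp hc0
    simpa [Function.comp_def] using this

end Aux

/-- Minty's trick for the p-Laplacian: if the variational inequality
`0 ≤ Λ(u−v) − ∫_Ω |u|^{p-2}u(u−v) − ∫_Ω |∇v|^{p-2}∇v·(∇u−∇v)` holds for all admissible `v`,
then `Λ(φ) = ∫_Ω |u|^{p-2}u φ + ∫_Ω |∇u|^{p-2}∇u·∇φ` for all admissible `φ`. -/
theorem minty_trick_pLaplacian (m : ℕ) (Ω : Set (EuclideanSpace ℝ (Fin m)))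
    (hΩ_open : IsOpen Ω) (hΩ_bdd : Bornology.IsBounded Ω)
    (p : ℝ) (hp : 2 ≤ p)
    (Λ : (EuclideanSpace ℝ (Fin m) → ℝ) → ℝ) (hΛ : IsLinearMap ℝ Λ) :
    let S : Set (EuclideanSpace ℝ (Fin m) → ℝ) :=
      {w | Differentiable ℝ w ∧ MemLp w (ENNReal.ofReal p) (volume.restrict Ω) ∧
        MemLp (fun x => gradient w x) (ENNReal.ofReal p) (volume.restrict Ω)}
    ∀ u ∈ S,
    (∀ v ∈ S,
      0 ≤ Λ (u - v) - (∫ x in Ω, |u x| ^ (p - 2) * u x * (u x - v x)) -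
        ∫ x in Ω, ‖gradient v x‖ ^ (p - 2) *
          ⟪gradient v x, gradient u x - gradient v x⟫) →
    ∀ φ ∈ S,
      Λ φ = (∫ x in Ω, |u x| ^ (p - 2) * u x * φ x) +
        ∫ x in Ω, ‖gradient u x‖ ^ (p - 2) * ⟪gradient u x, gradient φ x⟫ := by
  intro S u hu hineq φ hφ
  obtain ⟨hud, huL, huG⟩ := hu
  obtain ⟨hφd, hφL, hφG⟩ := hφ
  set G : EuclideanSpace ℝ (Fin m) → EuclideanSpace ℝ (Fin m) := fun x => gradient u x
  set H : EuclideanSpace ℝ (Fin m) → EuclideanSpace ℝ (Fin m) := fun x => gradient φ x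
  set A : ℝ := ∫ x in Ω, |u x| ^ (p - 2) * u x * φ x with hA
  -- key inequality for each nonzero t
  have key : ∀ t : ℝ, t ≠ 0 → 0 ≤ t * (Λ φ - A - ∫ x in Ω, ‖G x - t • H x‖ ^ (p - 2) *
      (inner ℝ (G x - t • H x) (H x) : ℝ)) := by
    intro t ht
    set v : EuclideanSpace ℝ (Fin m) → ℝ := u - t • φ with hv
    have hgradv : ∀ x, gradient v x = G x - t • H x := fun x =>
      gradient_sub_const_smul u φ hud hφd t x
    have hvS : v ∈ S := by
      refine ⟨hud.sub (hφd.const_smul t), huL.sub (hφL.const_smul t), ?_⟩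
      have : (fun x => gradient v x) = fun x => G x - t • H x := funext hgradv
      rw [this]
      exact huG.sub (hφG.const_smul t)
    have h0 := hineq v hvS
    have e1 : u - v = t • φ := by
      funext x; simp [hv]
    have e2 : Λ (u - v) = t * Λ φ := by
      rw [e1, hΛ.map_smul]; simp
    have e3 : (∫ x in Ω, |u x| ^ (p - 2) * u x * (u x - v x)) = t * A := by
      rw [hA, ← integral_const_mul]
      apply integral_congr_ae
      filter_upwards with x
      simp [hv]; ring
    have e4 : (∫ x in Ω, ‖gradient v x‖ ^ (p - 2) *
        ⟪gradient v x, gradient u x - gradient v x⟫) = t * ∫ x in Ω,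
          ‖G x - t • H x‖ ^ (p - 2) * (inner ℝ (G x - t • H x) (H x) : ℝ) := by
      rw [← integral_const_mul]
      apply integral_congr_ae
      filter_upwards with x
      rw [hgradv x]
      have h5 : gradient u x - (G x - t • H x) = t • H x := by
        show G x - (G x - t • H x) = t • H x
        abel
      rw [h5, real_inner_smul_right]
      ring
    rw [e2, e3, e4] at h0
    linarith
  -- positive sequence
  have hcpos : Tendsto (fun n : ℕ => 1 / (n + 1 : ℝ)) atTop (nhds 0) :=
    tendsto_one_div_add_atTop_nhds_zero_nat
  have hcbd : ∀ n : ℕ, |1 / (n + 1 : ℝ)| ≤ 1 := by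
    intro n
    rw [abs_of_pos (by positivity)]
    rw [div_le_one (by positivity)]
    linarith [Nat.cast_nonneg (α := ℝ) n]
  have hcneg : Tendsto (fun n : ℕ => -(1 / (n + 1 : ℝ))) atTop (nhds 0) := by
    simpa using hcpos.neg
  have hcbdneg : ∀ n : ℕ, |(-(1 / (n + 1 : ℝ)))| ≤ 1 := by
    intro n; rw [abs_neg]; exact hcbd n
  have hlim1 := tendsto_integral_grad G H p hp huG hφG _ hcpos hcbd
  have hlim2 := tendsto_integral_grad G H p hp huG hφG _ hcneg hcbdneg
  set B : ℝ := ∫ x in Ω, ‖G x‖ ^ (p - 2) * (inner ℝ (G x) (H x) : ℝ) with hB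
  have h1 : B ≤ Λ φ - A := by
    refine le_of_tendsto hlim1 (Eventually.of_forall fun n => ?_)
    have ht : (0:ℝ) < 1 / (n + 1 : ℝ) := by positivity
    have hk := key (1 / (n + 1 : ℝ)) (ne_of_gt ht)
    nlinarith [hk]
  have h2 : Λ φ - A ≤ B := by
    refine ge_of_tendsto hlim2 (Eventually.of_forall fun n => ?_)
    have ht : (-(1 / (n + 1 : ℝ))) < 0 := by
      have : (0:ℝ) < 1 / (n + 1 : ℝ) := by positivity
      linarith
    have hk := key (-(1 / (n + 1 : ℝ))) (ne_of_lt ht)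
    nlinarith [hk]
  have : Λ φ = A + B := by linarith
  exact this
end

section
/- Let ω ⊂ ℝ^n be bounded measurable, γ > 0, O^ε a family of measurable subsets of ω × ℝ with |O^ε| ≤ C ε^{γ+1}, f : ℝ → ℝ Lipschitz and bounded, p ≥ 2 with conjugate q, and u_ε, w_ε, u, w functions on ω × ℝ. Assume: (i) the rescaled q-norm bound (1/ε^{γ+1})∫_{O^ε}|u_ε − u|^q → 0; (ii) the rescaled p-norm bound (1/ε^{γ+1})∫_{O^ε}|w_ε − w|^p → 0; (iii) (1/ε^{γ+1})∫_{O^ε}|w|^p ≤ M uniformly in ε; and (iv) (1/ε^{γ+1})∫_{O^ε} f(u) w → ∫_Γ μ f(u) w dS for some function μ on Γ = ω × {0}. Then (1/ε^{γ+1})∫_{O^ε} f(u_ε) w_ε → ∫_Γ μ f(u) w dS as ε → 0⁺. -/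
open MeasureTheory Filter
open scoped ENNReal NNReal

lemma aux_memLp {α : Type*} [MeasurableSpace α] {μ : Measure α} {g : α → ℝ} {r : ℝ}
    (hr : 1 ≤ r) (hg : AEStronglyMeasurable g μ)
    (h : Integrable (fun x => |g x| ^ r) μ) : MemLp g (ENNReal.ofReal r) μ := by
  have hr0 : 0 < r := lt_of_lt_of_le one_pos hr
  have hq0 : ENNReal.ofReal r ≠ 0 := by simp [ENNReal.ofReal_eq_zero, not_le, hr0]
  have hqt : ENNReal.ofReal r ≠ ∞ := ENNReal.ofReal_ne_top
  refine (memLp_norm_rpow_iff (p := ENNReal.ofReal r) hg hq0 hqt).mp ?_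
  rw [ENNReal.div_self hq0 hqt, memLp_one_iff_integrable]
  have : (fun x => ‖g x‖ ^ (ENNReal.ofReal r).toReal) = fun x => |g x| ^ r := by
    funext x; rw [ENNReal.toReal_ofReal hr0.le, Real.norm_eq_abs]
  rw [this]; exact h

lemma aux_holder {α : Type*} [MeasurableSpace α] {μ : Measure α} {p q : ℝ}
    (hpq : Real.HolderConjugate p q) {g h : α → ℝ}
    (hg : AEStronglyMeasurable g μ) (hh : AEStronglyMeasurable h μ)
    (hgp : Integrable (fun x => |g x| ^ p) μ) (hhq : Integrable (fun x => |h x| ^ q) μ) :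
    ∫ x, |g x| * |h x| ∂μ ≤ (∫ x, |g x| ^ p ∂μ) ^ (1/p) * (∫ x, |h x| ^ q ∂μ) ^ (1/q) := by
  refine integral_mul_le_Lp_mul_Lq_of_nonneg hpq (ae_of_all _ fun x => abs_nonneg _)
    (ae_of_all _ fun x => abs_nonneg _) ?_ ?_
  · refine aux_memLp hpq.lt.le ?_ ?_
    · simpa [Real.norm_eq_abs] using hg.norm
    · simpa [abs_abs] using hgp
  · refine aux_memLp hpq.symm.lt.le ?_ ?_
    · simpa [Real.norm_eq_abs] using hh.norm
    · simpa [abs_abs] using hhq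

lemma aux_split (δ a b : ℝ) (hδ : 0 < δ) (ha : 0 ≤ a) (hb : 0 ≤ b) {s t : ℝ} (hst : s + t = 1) :
    δ * (a ^ s * b ^ t) = (δ * a) ^ s * (δ * b) ^ t := by
  have h1 : δ ^ s * δ ^ t = δ := by rw [← Real.rpow_add hδ, hst, Real.rpow_one]
  calc δ * (a ^ s * b ^ t) = (δ ^ s * δ ^ t) * (a ^ s * b ^ t) := by rw [h1]
    _ = (δ ^ s * a ^ s) * (δ ^ t * b ^ t) := by ring
    _ = (δ * a) ^ s * (δ * b) ^ t := by rw [Real.mul_rpow hδ.le ha, Real.mul_rpow hδ.le hb]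

lemma aux_abs_le (x r : ℝ) (hr : 1 ≤ r) : |x| ≤ 1 + |x| ^ r := by
  rcases le_total (|x|) 1 with h | h
  · have : (0:ℝ) ≤ |x| ^ r := Real.rpow_nonneg (abs_nonneg x) r
    linarith
  · have h2 : |x| ^ (1:ℝ) ≤ |x| ^ r := Real.rpow_le_rpow_of_exponent_le h hr
    rw [Real.rpow_one] at h2; linarith


/-- Stability of the concentrated nonlinear term under perturbation of both arguments:
if `u_ε → u` in the rescaled `L^q`-sense, `w_ε → w` in the rescaled `L^p`-sense, the rescaled
`L^p`-norm of `w` is uniformly bounded and `(1/ε^{γ+1})∫_{O^ε} f(u) w → ∫_Γ μ f(u) w dS`, then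
`(1/ε^{γ+1})∫_{O^ε} f(u_ε) w_ε → ∫_Γ μ f(u) w dS`. -/
theorem concentrated_term_stability (n : ℕ) (ω : Set (Fin n → ℝ))
    (hω_meas : MeasurableSet ω) (hω_bdd : Bornology.IsBounded ω)
    (γ C : ℝ) (hγ : 0 < γ) (O : ℝ → Set ((Fin n → ℝ) × ℝ))
    (hO_meas : ∀ ε > (0 : ℝ), MeasurableSet (O ε))
    (hO_sub : ∀ ε > (0 : ℝ), O ε ⊆ ω ×ˢ Set.univ)
    (hO_vol : ∀ ε > (0 : ℝ), volume (O ε) ≤ ENNReal.ofReal (C * ε ^ (γ + 1)))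
    (f : ℝ → ℝ) (L : NNReal) (hf_lip : LipschitzWith L f) (hf_bdd : ∃ M, ∀ t, |f t| ≤ M)
    (p q : ℝ) (hp : 2 ≤ p) (hpq : 1 / p + 1 / q = 1)
    (uε wε : ℝ → (Fin n → ℝ) × ℝ → ℝ) (u w : (Fin n → ℝ) × ℝ → ℝ)
    (hmeas : ∀ ε > (0 : ℝ), Measurable (uε ε) ∧ Measurable (wε ε))
    (hu_meas : Measurable u) (hw_meas : Measurable w)
    (hInt : ∀ ε > (0 : ℝ),
      IntegrableOn (fun z => |uε ε z - u z| ^ q) (O ε) volume ∧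
      IntegrableOn (fun z => |wε ε z - w z| ^ p) (O ε) volume ∧
      IntegrableOn (fun z => |w z| ^ p) (O ε) volume)
    (hu_conv : Tendsto (fun ε => (1 / ε ^ (γ + 1)) * ∫ z in O ε, |uε ε z - u z| ^ q)
      (nhdsWithin 0 (Set.Ioi 0)) (nhds 0))
    (hw_conv : Tendsto (fun ε => (1 / ε ^ (γ + 1)) * ∫ z in O ε, |wε ε z - w z| ^ p)
      (nhdsWithin 0 (Set.Ioi 0)) (nhds 0))
    (M : ℝ)
    (hw_bdd : ∀ ε > (0 : ℝ), (1 / ε ^ (γ + 1)) * (∫ z in O ε, |w z| ^ p) ≤ M)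
    (μΓ : (Fin n → ℝ) → ℝ)
    (hfw_conv : Tendsto (fun ε => (1 / ε ^ (γ + 1)) * ∫ z in O ε, f (u z) * w z)
      (nhdsWithin 0 (Set.Ioi 0))
      (nhds (∫ x in ω, μΓ x * f (u (x, 0)) * w (x, 0)))) :
    Tendsto (fun ε => (1 / ε ^ (γ + 1)) * ∫ z in O ε, f (uε ε z) * wε ε z)
      (nhdsWithin 0 (Set.Ioi 0))
      (nhds (∫ x in ω, μΓ x * f (u (x, 0)) * w (x, 0))) := by
  obtain ⟨Mf, hMf⟩ := hf_bdd
  have hMf0 : 0 ≤ Mf := le_trans (abs_nonneg _) (hMf 0)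
  have hp1 : 1 < p := by linarith
  have hpq' : Real.HolderConjugate p q := Real.holderConjugate_iff.mpr ⟨hp1, by rw [← one_div, ← one_div]; exact hpq⟩
  have hq1 : 1 < q := hpq'.symm.lt
  have hC'0 : (0:ℝ) ≤ max C 0 := le_max_right _ _
  have hM'0 : (0:ℝ) ≤ max M 0 := le_max_right _ _
  set C' := max C 0 with hC'def
  set M' := max M 0 with hM'def
  set B : ℝ → ℝ := fun ε =>
    Mf * (((1 / ε ^ (γ + 1)) * ∫ z in O ε, |wε ε z - w z| ^ p) ^ (1/p) * C' ^ (1/q)) +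
    (L : ℝ) * (M' ^ (1/p) * ((1 / ε ^ (γ + 1)) * ∫ z in O ε, |uε ε z - u z| ^ q) ^ (1/q))
    with hBdef
  -- key pointwise-in-ε estimate
  have key : ∀ ε : ℝ, 0 < ε →
      |(1 / ε ^ (γ + 1)) * (∫ z in O ε, f (uε ε z) * wε ε z) -
        (1 / ε ^ (γ + 1)) * ∫ z in O ε, f (u z) * w z| ≤ B ε := by
    intro ε hε
    have hδp : (0:ℝ) < ε ^ (γ + 1) := Real.rpow_pos_of_pos hε _
    set δ : ℝ := 1 / ε ^ (γ + 1) with hδdef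
    have hδ : 0 < δ := by positivity
    obtain ⟨huεm, hwεm⟩ := hmeas ε hε
    obtain ⟨hIu, hIw, hIwp⟩ := hInt ε hε
    haveI : IsFiniteMeasure (volume.restrict (O ε)) := by
      constructor
      rw [Measure.restrict_apply_univ]
      exact lt_of_le_of_lt (hO_vol ε hε) ENNReal.ofReal_lt_top
    have hfm : Measurable f := hf_lip.continuous.measurable
    have m1 : AEStronglyMeasurable (fun z => wε ε z - w z) (volume.restrict (O ε)) :=
      (hwεm.sub hw_meas).aestronglyMeasurable
    have m2 : AEStronglyMeasurable (fun z => uε ε z - u z) (volume.restrict (O ε)) :=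
      (huεm.sub hu_meas).aestronglyMeasurable
    have Iww : Integrable (fun z => |wε ε z - w z|) (volume.restrict (O ε)) := by
      refine Integrable.mono ((integrable_const 1).add hIw)
        ((hwεm.sub hw_meas).abs.aestronglyMeasurable) (ae_of_all _ fun z => ?_)
      simp only [Real.norm_eq_abs, abs_abs]
      exact (aux_abs_le _ p (by linarith)).trans (le_abs_self _)
    have Iuw : Integrable (fun z => |uε ε z - u z| * |w z|) (volume.restrict (O ε)) := by
      refine Integrable.mono (hIu.add hIwp)
        (((huεm.sub hu_meas).abs.mul hw_meas.abs).aestronglyMeasurable)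
        (ae_of_all _ fun z => ?_)
      simp only [Real.norm_eq_abs]
      rw [abs_of_nonneg (mul_nonneg (abs_nonneg _) (abs_nonneg _))]
      have hy := Real.young_inequality_of_nonneg (abs_nonneg (uε ε z - u z))
        (abs_nonneg (w z)) hpq'.symm
      have h1 : |uε ε z - u z| ^ q / q ≤ |uε ε z - u z| ^ q :=
        div_le_self (Real.rpow_nonneg (abs_nonneg _) _) hq1.le
      have h2 : |w z| ^ p / p ≤ |w z| ^ p :=
        div_le_self (Real.rpow_nonneg (abs_nonneg _) _) hp1.le
      have : |uε ε z - u z| * |w z| ≤ |uε ε z - u z| ^ q + |w z| ^ p := by linarith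
      exact this.trans (le_abs_self _)
    have If_u_w : Integrable (fun z => f (u z) * w z) (volume.restrict (O ε)) := by
      refine Integrable.mono (((integrable_const 1).add hIwp).const_mul Mf)
        (((hfm.comp hu_meas).mul hw_meas).aestronglyMeasurable) (ae_of_all _ fun z => ?_)
      simp only [Real.norm_eq_abs, Pi.add_apply]
      have h : |f (u z)| * |w z| ≤ Mf * (1 + |w z| ^ p) :=
        mul_le_mul (hMf _) (aux_abs_le _ p (by linarith)) (abs_nonneg _) hMf0
      refine le_trans ?_ (le_abs_self _)
      rw [abs_mul]
      exact h
    have If_uε_wε : Integrable (fun z => f (uε ε z) * wε ε z) (volume.restrict (O ε)) := by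
      refine Integrable.mono ((Iww.add ((integrable_const 1).add hIwp)).const_mul Mf)
        (((hfm.comp huεm).mul hwεm).aestronglyMeasurable) (ae_of_all _ fun z => ?_)
      simp only [Real.norm_eq_abs]
      have hw1 : |wε ε z| ≤ |wε ε z - w z| + (1 + |w z| ^ p) := by
        have h0 : |wε ε z| ≤ |wε ε z - w z| + |w z| := by
          have := abs_add_le (wε ε z - w z) (w z); simpa using this
        have := aux_abs_le (w z) p (by linarith)
        linarith
      have h : |f (uε ε z)| * |wε ε z| ≤ Mf * (|wε ε z - w z| + (1 + |w z| ^ p)) :=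
        mul_le_mul (hMf _) hw1 (abs_nonneg _) hMf0
      simp only [Pi.add_apply]
      refine le_trans ?_ (le_abs_self _)
      rw [abs_mul]
      exact h
    -- pointwise bound
    have hpt : ∀ z, |f (uε ε z) * wε ε z - f (u z) * w z| ≤
        Mf * |wε ε z - w z| + (L : ℝ) * (|uε ε z - u z| * |w z|) := by
      intro z
      have hL : |f (uε ε z) - f (u z)| ≤ (L : ℝ) * |uε ε z - u z| := by
        have := hf_lip.dist_le_mul (uε ε z) (u z)
        simpa [Real.dist_eq] using this
      have e : f (uε ε z) * wε ε z - f (u z) * w z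
          = f (uε ε z) * (wε ε z - w z) + (f (uε ε z) - f (u z)) * w z := by ring
      rw [e]
      calc |f (uε ε z) * (wε ε z - w z) + (f (uε ε z) - f (u z)) * w z|
          ≤ |f (uε ε z) * (wε ε z - w z)| + |(f (uε ε z) - f (u z)) * w z| := abs_add_le _ _
        _ = |f (uε ε z)| * |wε ε z - w z| + |f (uε ε z) - f (u z)| * |w z| := by
            rw [abs_mul, abs_mul]
        _ ≤ Mf * |wε ε z - w z| + ((L : ℝ) * |uε ε z - u z|) * |w z| :=
            add_le_add (mul_le_mul_of_nonneg_right (hMf _) (abs_nonneg _))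
              (mul_le_mul_of_nonneg_right hL (abs_nonneg _))
        _ = Mf * |wε ε z - w z| + (L : ℝ) * (|uε ε z - u z| * |w z|) := by ring
    -- integral triangle + pointwise bound
    have step1 : |(∫ z in O ε, f (uε ε z) * wε ε z) - ∫ z in O ε, f (u z) * w z| ≤
        Mf * (∫ z in O ε, |wε ε z - w z|) + (L : ℝ) * ∫ z in O ε, |uε ε z - u z| * |w z| := by
      rw [← integral_sub If_uε_wε If_u_w]
      calc |∫ z in O ε, (f (uε ε z) * wε ε z - f (u z) * w z)|
          ≤ ∫ z in O ε, |f (uε ε z) * wε ε z - f (u z) * w z| := by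
            simpa [Real.norm_eq_abs] using norm_integral_le_integral_norm
              (μ := volume.restrict (O ε)) (fun z => f (uε ε z) * wε ε z - f (u z) * w z)
        _ ≤ ∫ z in O ε, (Mf * |wε ε z - w z| + (L : ℝ) * (|uε ε z - u z| * |w z|)) :=
            integral_mono (If_uε_wε.sub If_u_w).abs
              ((Iww.const_mul Mf).add (Iuw.const_mul (L : ℝ))) hpt
        _ = Mf * (∫ z in O ε, |wε ε z - w z|) +
            (L : ℝ) * ∫ z in O ε, |uε ε z - u z| * |w z| := by
            rw [integral_add (Iww.const_mul Mf) (Iuw.const_mul (L : ℝ)),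
              integral_const_mul, integral_const_mul]
    -- Hölder estimates
    have hH1 : (∫ z in O ε, |wε ε z - w z|) ≤
        (∫ z in O ε, |wε ε z - w z| ^ p) ^ (1/p) * ((volume (O ε)).toReal) ^ (1/q) := by
      have h := aux_holder (μ := volume.restrict (O ε)) hpq'
        (g := fun z => wε ε z - w z) (h := fun _ => (1:ℝ)) m1 aestronglyMeasurable_const
        hIw (by simpa using (integrable_const (1:ℝ) :
          Integrable (fun _ => (1:ℝ)) (volume.restrict (O ε))))
      simpa [abs_one, mul_one, Real.one_rpow, Measure.restrict_apply_univ, smul_eq_mul, Measure.real] using h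
    have hH2 : (∫ z in O ε, |uε ε z - u z| * |w z|) ≤
        (∫ z in O ε, |w z| ^ p) ^ (1/p) * (∫ z in O ε, |uε ε z - u z| ^ q) ^ (1/q) := by
      have h := aux_holder (μ := volume.restrict (O ε)) hpq'
        (g := w) (h := fun z => uε ε z - u z) hw_meas.aestronglyMeasurable m2 hIwp hIu
      calc (∫ z in O ε, |uε ε z - u z| * |w z|) = ∫ z in O ε, |w z| * |uε ε z - u z| := by
            simp_rw [mul_comm]
        _ ≤ _ := h
    -- nonnegativity
    have hWp0 : (0:ℝ) ≤ ∫ z in O ε, |wε ε z - w z| ^ p :=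
      integral_nonneg fun z => Real.rpow_nonneg (abs_nonneg _) _
    have hUq0 : (0:ℝ) ≤ ∫ z in O ε, |uε ε z - u z| ^ q :=
      integral_nonneg fun z => Real.rpow_nonneg (abs_nonneg _) _
    have hPw0 : (0:ℝ) ≤ ∫ z in O ε, |w z| ^ p :=
      integral_nonneg fun z => Real.rpow_nonneg (abs_nonneg _) _
    have hvS0 : (0:ℝ) ≤ (volume (O ε)).toReal := ENNReal.toReal_nonneg
    have hvS : (volume (O ε)).toReal ≤ C' * ε ^ (γ + 1) := by
      refine ENNReal.toReal_le_of_le_ofReal (by positivity)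
        ((hO_vol ε hε).trans (ENNReal.ofReal_le_ofReal ?_))
      exact mul_le_mul_of_nonneg_right (le_max_left _ _) hδp.le
    have hδvS : δ * (volume (O ε)).toReal ≤ C' := by
      have := mul_le_mul_of_nonneg_left hvS hδ.le
      calc δ * (volume (O ε)).toReal ≤ δ * (C' * ε ^ (γ + 1)) := this
        _ = C' := by rw [hδdef]; field_simp
    have hδPw : δ * (∫ z in O ε, |w z| ^ p) ≤ M' :=
      le_trans (hw_bdd ε hε) (le_max_left _ _)
    -- final chain
    have final : δ * |(∫ z in O ε, f (uε ε z) * wε ε z) - ∫ z in O ε, f (u z) * w z| ≤ B ε := by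
      calc δ * |(∫ z in O ε, f (uε ε z) * wε ε z) - ∫ z in O ε, f (u z) * w z|
          ≤ δ * (Mf * (∫ z in O ε, |wε ε z - w z|) +
              (L : ℝ) * ∫ z in O ε, |uε ε z - u z| * |w z|) :=
            mul_le_mul_of_nonneg_left step1 hδ.le
        _ ≤ δ * (Mf * ((∫ z in O ε, |wε ε z - w z| ^ p) ^ (1/p) *
                ((volume (O ε)).toReal) ^ (1/q)) +
              (L : ℝ) * ((∫ z in O ε, |w z| ^ p) ^ (1/p) *
                (∫ z in O ε, |uε ε z - u z| ^ q) ^ (1/q))) := by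
            refine mul_le_mul_of_nonneg_left (add_le_add
              (mul_le_mul_of_nonneg_left hH1 hMf0)
              (mul_le_mul_of_nonneg_left hH2 L.coe_nonneg)) hδ.le
        _ = Mf * ((δ * ∫ z in O ε, |wε ε z - w z| ^ p) ^ (1/p) *
                (δ * (volume (O ε)).toReal) ^ (1/q)) +
            (L : ℝ) * ((δ * ∫ z in O ε, |w z| ^ p) ^ (1/p) *
                (δ * ∫ z in O ε, |uε ε z - u z| ^ q) ^ (1/q)) := by
            rw [mul_add]
            congr 1
            · rw [show δ * (Mf * ((∫ z in O ε, |wε ε z - w z| ^ p) ^ (1/p) *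
                ((volume (O ε)).toReal) ^ (1/q))) = Mf * (δ * ((∫ z in O ε, |wε ε z - w z| ^ p) ^ (1/p) *
                ((volume (O ε)).toReal) ^ (1/q))) from by ring,
                aux_split δ _ _ hδ hWp0 hvS0 hpq]
            · rw [show δ * ((L : ℝ) * ((∫ z in O ε, |w z| ^ p) ^ (1/p) *
                (∫ z in O ε, |uε ε z - u z| ^ q) ^ (1/q))) = (L : ℝ) * (δ * ((∫ z in O ε, |w z| ^ p) ^ (1/p) *
                (∫ z in O ε, |uε ε z - u z| ^ q) ^ (1/q))) from by ring,
                aux_split δ _ _ hδ hPw0 hUq0 hpq]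
        _ ≤ Mf * ((δ * ∫ z in O ε, |wε ε z - w z| ^ p) ^ (1/p) * C' ^ (1/q)) +
            (L : ℝ) * (M' ^ (1/p) * (δ * ∫ z in O ε, |uε ε z - u z| ^ q) ^ (1/q)) := by
            refine add_le_add
              (mul_le_mul_of_nonneg_left (mul_le_mul_of_nonneg_left
                (Real.rpow_le_rpow (by positivity) hδvS (by positivity)) (by positivity)) hMf0)
              (mul_le_mul_of_nonneg_left (mul_le_mul_of_nonneg_right
                (Real.rpow_le_rpow (by positivity) hδPw (by positivity)) (by positivity))
                L.coe_nonneg)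
        _ = B ε := by rw [hBdef, hδdef]
    calc |δ * (∫ z in O ε, f (uε ε z) * wε ε z) - δ * ∫ z in O ε, f (u z) * w z|
        = δ * |(∫ z in O ε, f (uε ε z) * wε ε z) - ∫ z in O ε, f (u z) * w z| := by
          rw [← mul_sub, abs_mul, abs_of_pos hδ]
      _ ≤ B ε := final
  -- limit of B is 0
  have hBlim : Tendsto B (nhdsWithin 0 (Set.Ioi 0)) (nhds 0) := by
    have hpne : (1:ℝ)/p ≠ 0 := by positivity
    have hqne : (1:ℝ)/q ≠ 0 := by positivity
    have h1 : Tendsto (fun ε => ((1 / ε ^ (γ + 1)) *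
        ∫ z in O ε, |wε ε z - w z| ^ p) ^ (1/p)) (nhdsWithin 0 (Set.Ioi 0)) (nhds 0) := by
      have := hw_conv.rpow_const (p := 1/p) (Or.inr (by positivity))
      rwa [Real.zero_rpow hpne] at this
    have h2 : Tendsto (fun ε => ((1 / ε ^ (γ + 1)) *
        ∫ z in O ε, |uε ε z - u z| ^ q) ^ (1/q)) (nhdsWithin 0 (Set.Ioi 0)) (nhds 0) := by
      have := hu_conv.rpow_const (p := 1/q) (Or.inr (by positivity))
      rwa [Real.zero_rpow hqne] at this
    have hcomb := (((h1.mul_const (C' ^ (1/q))).const_mul Mf).add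
      ((h2.const_mul (M' ^ (1/p))).const_mul (L : ℝ)))
    rw [hBdef]
    simpa only [zero_mul, mul_zero, add_zero] using hcomb
  -- squeeze
  have habs : Tendsto (fun ε => |(1 / ε ^ (γ + 1)) * (∫ z in O ε, f (uε ε z) * wε ε z) -
      (1 / ε ^ (γ + 1)) * ∫ z in O ε, f (u z) * w z|) (nhdsWithin 0 (Set.Ioi 0)) (nhds 0) := by
    refine squeeze_zero' (Eventually.of_forall fun ε => abs_nonneg _) ?_ hBlim
    filter_upwards [self_mem_nhdsWithin] with ε hε
    exact key ε hε
  have hdiff : Tendsto (fun ε => (1 / ε ^ (γ + 1)) * (∫ z in O ε, f (uε ε z) * wε ε z) -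
      (1 / ε ^ (γ + 1)) * ∫ z in O ε, f (u z) * w z) (nhdsWithin 0 (Set.Ioi 0)) (nhds 0) := by
    rwa [tendsto_zero_iff_abs_tendsto_zero]
  have := hdiff.add hfw_conv
  simpa using this
end

section
/- Let a < b be reals, p ≥ 2, and 1 − 1/p < s ≤ 1. Then for every u in the Sobolev space W^{1,p}(a,b) and every subinterval (c,b) ⊂ (a,b) of length δ = b − c > 0, one has (1/δ)∫_c^b |u(y)|^p dy ≤ C ‖u‖^p_{W^{s,p}(a,b)} for a constant C independent of δ and u (depending only on a, b, s, p). -/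
open MeasureTheory

lemma helperA {p : ℝ} (hp : 1 < p) {S : Set ℝ}
    (f : ℝ → ℝ) (hf : AEMeasurable f (volume.restrict S)) :
    ENNReal.ofReal |∫ x in S, f x| ^ p ≤
      (volume S) ^ (p - 1) * ∫⁻ x in S, ENNReal.ofReal (|f x| ^ p) := by
  have hpq : p.HolderConjugate (Real.conjExponent p) := Real.HolderConjugate.conjExponent hp
  have h1 : ENNReal.ofReal |∫ x in S, f x| ≤ ∫⁻ x in S, ENNReal.ofReal |f x| := by
    calc ENNReal.ofReal |∫ x in S, f x| = ‖∫ x in S, f x‖ₑ := by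
          rw [Real.enorm_eq_ofReal_abs]
      _ ≤ ∫⁻ x in S, ‖f x‖ₑ := enorm_integral_le_lintegral_enorm _
      _ = ∫⁻ x in S, ENNReal.ofReal |f x| := by
          simp_rw [Real.enorm_eq_ofReal_abs]
  have h2 : (∫⁻ x in S, ENNReal.ofReal |f x|) ≤
      (∫⁻ x in S, ENNReal.ofReal |f x| ^ p) ^ (1/p) * (volume S) ^ (1 / Real.conjExponent p) := by
    have := ENNReal.lintegral_mul_le_Lp_mul_Lq (volume.restrict S) hpq
      (f := fun x => ENNReal.ofReal |f x|) (g := fun _ => 1)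
      ((measurable_abs.comp_aemeasurable hf).ennreal_ofReal) aemeasurable_const
    simpa using this
  calc ENNReal.ofReal |∫ x in S, f x| ^ p
      ≤ ((∫⁻ x in S, ENNReal.ofReal |f x| ^ p) ^ (1/p) * (volume S) ^ (1 / Real.conjExponent p)) ^ p :=
        ENNReal.rpow_le_rpow (h1.trans h2) (by positivity)
    _ = (∫⁻ x in S, ENNReal.ofReal |f x| ^ p) * (volume S) ^ (p - 1) := by
        rw [ENNReal.mul_rpow_of_nonneg _ _ (by positivity), ← ENNReal.rpow_mul,
          ← ENNReal.rpow_mul, one_div_mul_cancel hpq.ne_zero,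
          ENNReal.rpow_one]
        congr 1
        rw [div_mul_eq_mul_div, one_mul, hpq.div_conj_eq_sub_one]
    _ = (volume S) ^ (p - 1) * ∫⁻ x in S, ENNReal.ofReal (|f x| ^ p) := by
        rw [mul_comm]
        congr 1
        refine lintegral_congr fun x => ?_
        rw [ENNReal.ofReal_rpow_of_nonneg (abs_nonneg _) (by positivity)]

lemma two_point {r t p : ℝ} (hr : 0 ≤ r) (ht : 0 ≤ t) (hp : 1 ≤ p) :
    (r + t) ^ p ≤ 2 ^ (p - 1) * (r ^ p + t ^ p) := by
  have h := NNReal.coe_le_coe.2 (NNReal.rpow_add_le_mul_rpow_add_rpow r.toNNReal t.toNNReal hp)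
  push_cast [Real.coe_toNNReal r hr, Real.coe_toNNReal t ht] at h
  convert h using 3

lemma two_point' {A r t p : ℝ} (hA : |A| ≤ r + t) (hr : 0 ≤ r) (ht : 0 ≤ t) (hp : 1 ≤ p) :
    ENNReal.ofReal (|A| ^ p) ≤
      ENNReal.ofReal (2 ^ (p - 1)) * (ENNReal.ofReal (r ^ p) + ENNReal.ofReal (t ^ p)) := by
  rw [← ENNReal.ofReal_add (by positivity) (by positivity), ← ENNReal.ofReal_mul (by positivity)]
  refine ENNReal.ofReal_le_ofReal ?_
  calc |A| ^ p ≤ (r + t) ^ p := Real.rpow_le_rpow (abs_nonneg _) hA (by linarith)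
    _ ≤ 2 ^ (p - 1) * (r ^ p + t ^ p) := two_point hr ht hp

lemma coeff_sum {k1 k2 k3 Ir Jr : ℝ} (h1 : 0 ≤ k1) (h2 : 0 ≤ k2) (h3 : 0 ≤ k3)
    (hI : 0 ≤ Ir) (hJ : 0 ≤ Jr) :
    k1 * Jr + (k2 * Ir + k3 * Jr) ≤ (k1 + k2 + k3) * (Ir + Jr) := by
  nlinarith [mul_nonneg h1 hI, mul_nonneg h2 hJ, mul_nonneg h3 hI]

lemma qb {A d D e : ℝ} (hA : 0 ≤ A) (hd : 0 ≤ d) (hdD : d ≤ D) (he : 0 < e)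
    (hA0 : d = 0 → A = 0) : A ≤ D ^ e * (A / d ^ e) := by
  rcases eq_or_lt_of_le hd with h0 | h0
  · rw [hA0 h0.symm]
    have hD : 0 ≤ D := le_trans hd hdD
    positivity
  · have hde : 0 < d ^ e := Real.rpow_pos_of_pos h0 e
    have hDe : d ^ e ≤ D ^ e := Real.rpow_le_rpow hd hdD he.le
    rw [mul_div_assoc', le_div_iff₀ hde]
    calc A * d ^ e ≤ A * D ^ e := by nlinarith
      _ = D ^ e * A := mul_comm _ _

lemma geom_bound {r : ℝ} (hr : 0 ≤ r) (hr1 : r < 1) (n : ℕ) :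
    ∑ i ∈ Finset.range n, r ^ i ≤ (1 - r)⁻¹ := by
  have h1 : (0:ℝ) < 1 - r := by linarith
  rw [geom_sum_eq (by linarith : r ≠ 1)]
  have hrn : (0:ℝ) ≤ r ^ n := by positivity
  have hrn1 : r ^ n ≤ 1 := pow_le_one₀ hr hr1.le
  rw [div_le_iff_of_neg (by linarith : r - 1 < 0)]
  have : (1 - r)⁻¹ * (r - 1) = -1 := by field_simp; ring
  rw [this]
  linarith

set_option maxHeartbeats 1000000 in
/-- One-dimensional core of the concentrated-integral estimate: for `p ≥ 2` and
`1 − 1/p < s ≤ 1` there is `C` (depending only on `a, b, s, p`) such that for every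
`u ∈ W^{1,p}(a,b)` and every subinterval `(c,b)` of length `δ`,
`(1/δ) ∫_c^b |u|^p ≤ C ‖u‖^p_{W^{s,p}(a,b)}`, where for `s < 1` the `W^{s,p}` norm is the
Sobolev–Slobodeckij norm and for `s = 1` it is the `W^{1,p}` norm. -/
theorem endpoint_average_fractional_estimate (a b p s : ℝ) (hab : a < b)
    (hp : 2 ≤ p) (hs : 1 - 1 / p < s) (hs1 : s ≤ 1) :
    ∃ C : ℝ, 0 < C ∧ ∀ u : ℝ → ℝ,
      (∀ x ∈ Set.Icc a b, DifferentiableAt ℝ u x) →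
      ∀ c : ℝ, a ≤ c → c < b →
        ENNReal.ofReal (1 / (b - c)) *
            (∫⁻ y in Set.Ioo c b, ENNReal.ofReal (|u y| ^ p)) ≤
          ENNReal.ofReal C *
            ((∫⁻ y in Set.Ioo a b, ENNReal.ofReal (|u y| ^ p)) +
              if s = 1 then ∫⁻ y in Set.Ioo a b, ENNReal.ofReal (|deriv u y| ^ p)
              else ∫⁻ x in Set.Ioo a b, ∫⁻ y in Set.Ioo a b,
                ENNReal.ofReal (|u x - u y| ^ p / |x - y| ^ (1 + s * p))) := by
  have hp1 : (1:ℝ) < p := by linarith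
  have hp0 : (0:ℝ) < p := by linarith
  have hba : (0:ℝ) < b - a := by linarith
  -- constants
  obtain ⟨e, he_def⟩ : ∃ x : ℝ, x = s * p - 1 := ⟨_, rfl⟩
  have hsp1 : p - 1 < s * p := by
    have h1 : (1 - 1/p) * p < s * p := by
      apply mul_lt_mul_of_pos_right hs hp0
    calc p - 1 = (1 - 1/p) * p := by field_simp
      _ < s * p := h1
  have he : 0 < e := by rw [he_def]; linarith
  have hsp0 : 0 < s * p := by linarith
  have hs0 : 0 < s := by
    rcases le_or_gt s 0 with h | h
    · nlinarith
    · exact h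
  obtain ⟨r, hr_def⟩ : ∃ x : ℝ, x = ((2:ℝ) ^ (e / p))⁻¹ := ⟨_, rfl⟩
  have h2ep : (1:ℝ) < (2:ℝ) ^ (e / p) := by
    apply Real.one_lt_rpow_iff_of_pos (by norm_num) |>.2
    left; constructor; norm_num; positivity
  have hr0 : 0 < r := by rw [hr_def]; positivity
  have hr1 : r < 1 := by
    rw [hr_def, inv_lt_one_iff₀]; right; exact h2ep
  obtain ⟨C1, hC1_def⟩ : ∃ x : ℝ, x = (b - a)⁻¹ * 2 ^ (p - 1) + 2 ^ (p - 1) * (b - a) ^ (p - 1) :=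
    ⟨_, rfl⟩
  obtain ⟨M0, hM0_def⟩ : ∃ x : ℝ, x = 2 ^ (s * p) * (b - a) ^ e := ⟨_, rfl⟩
  have hM0 : 0 < M0 := by rw [hM0_def]; positivity
  obtain ⟨C2, hC2_def⟩ : ∃ x : ℝ, x = 2 ^ (p - 1) * (b - a) ^ e +
      2 ^ (p - 1) * 2 ^ (p - 1) * (b - a)⁻¹ +
      2 ^ (p - 1) * 2 ^ (p - 1) * (((1 - r)⁻¹) ^ p * M0) := ⟨_, rfl⟩
  have hC1 : 0 < C1 := by rw [hC1_def]; positivity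
  have hC2 : 0 < C2 := by
    rw [hC2_def]
    have h1r : 0 < 1 - r := by linarith
    positivity
  refine ⟨C1 + C2, by linarith, ?_⟩
  intro u hdiff c hac hcb
  have hδ : 0 < b - c := by linarith
  have hC1C : C1 ≤ C1 + C2 := by linarith
  have hC2C : C2 ≤ C1 + C2 := by linarith
  have hCpos : (0:ℝ) < C1 + C2 := by linarith
  -- continuity and integrability of u
  have hu_cont : ContinuousOn u (Set.Icc a b) :=
    fun x hx => (hdiff x hx).continuousAt.continuousWithinAt
  have hu_int : IntegrableOn u (Set.Icc a b) := hu_cont.integrableOn_Icc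
  set I := ∫⁻ y in Set.Ioo a b, ENNReal.ofReal (|u y| ^ p) with hI_def
  by_cases hseq : s = 1
  · -- case s = 1
    rw [if_pos hseq]
    set E := ∫⁻ y in Set.Ioo a b, ENNReal.ofReal (|deriv u y| ^ p) with hE_def
    by_cases htop : I + E = ⊤
    · rw [htop, ENNReal.mul_top (ENNReal.ofReal_pos.2 hCpos).ne']
      exact le_top
    have hI_ne : I ≠ ⊤ := fun h => htop (by simp [h])
    have hE_ne : E ≠ ⊤ := fun h => htop (by simp [h])
    -- deriv u is integrable on Ioo a b
    have hder_int : IntegrableOn (deriv u) (Set.Ioo a b) := by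
      refine ⟨(measurable_deriv u).aestronglyMeasurable, ?_⟩
      rw [hasFiniteIntegral_iff_norm]
      calc ∫⁻ x in Set.Ioo a b, ENNReal.ofReal ‖deriv u x‖
          ≤ ∫⁻ x in Set.Ioo a b, (1 + ENNReal.ofReal (|deriv u x| ^ p)) := by
            refine lintegral_mono fun x => ?_
            rw [Real.norm_eq_abs]
            rcases le_total |deriv u x| 1 with h | h
            · calc ENNReal.ofReal |deriv u x| ≤ 1 := by
                    simpa using ENNReal.ofReal_le_ofReal h
                _ ≤ _ := le_self_add
            · have hle : |deriv u x| ≤ |deriv u x| ^ p := by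
                calc |deriv u x| = |deriv u x| ^ (1:ℝ) := (Real.rpow_one _).symm
                  _ ≤ _ := Real.rpow_le_rpow_of_exponent_le h (by linarith)
              calc ENNReal.ofReal |deriv u x| ≤ ENNReal.ofReal (|deriv u x| ^ p) :=
                    ENNReal.ofReal_le_ofReal hle
                _ ≤ _ := le_add_self
        _ = (1 * volume (Set.Ioo a b)) + E := by
            rw [lintegral_add_left measurable_const, setLIntegral_const]
        _ < ⊤ := by
            rw [Real.volume_Ioo]
            exact ENNReal.add_lt_top.2 ⟨by simp, hE_ne.lt_top⟩
    -- FTC bound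
    have hFTC : ∀ x ∈ Set.Ioo a b, ∀ y ∈ Set.Ioo a b,
        ENNReal.ofReal (|u y - u x| ^ p) ≤ ENNReal.ofReal ((b - a) ^ (p - 1)) * E := by
      have key : ∀ x ∈ Set.Ioo a b, ∀ y ∈ Set.Ioo a b, x ≤ y →
          ENNReal.ofReal (|u y - u x| ^ p) ≤ ENNReal.ofReal ((b - a) ^ (p - 1)) * E := by
        intro x hx y hy hxy
        have hsub : Set.uIcc x y ⊆ Set.Icc a b := by
          rw [Set.uIcc_of_le hxy]
          exact Set.Icc_subset_Icc hx.1.le hy.2.le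
        have hftc : ∫ t in x..y, deriv u t = u y - u x := by
          apply intervalIntegral.integral_eq_sub_of_hasDerivAt
          · intro t ht
            exact (hdiff t (hsub ht)).hasDerivAt
          · apply IntegrableOn.intervalIntegrable
            apply hder_int.mono_set
            rw [Set.uIcc_of_le hxy]
            intro t ht
            exact ⟨lt_of_lt_of_le hx.1 ht.1, lt_of_le_of_lt ht.2 hy.2⟩
        have hioc : u y - u x = ∫ t in Set.Ioc x y, deriv u t := by
          rw [← hftc, intervalIntegral.integral_of_le hxy]
        rw [← ENNReal.ofReal_rpow_of_nonneg (abs_nonneg _) hp0.le, hioc]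
        calc ENNReal.ofReal |∫ t in Set.Ioc x y, deriv u t| ^ p
            ≤ (volume (Set.Ioc x y)) ^ (p - 1) *
                ∫⁻ t in Set.Ioc x y, ENNReal.ofReal (|deriv u t| ^ p) := by
              apply helperA hp1
              exact ((measurable_deriv u).aemeasurable)
          _ ≤ ENNReal.ofReal ((b - a) ^ (p - 1)) * E := by
              apply mul_le_mul'
              · rw [Real.volume_Ioc, ← ENNReal.ofReal_rpow_of_nonneg (by linarith) (by linarith)]
                apply ENNReal.rpow_le_rpow _ (by linarith)
                apply ENNReal.ofReal_le_ofReal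
                have := hx.1; have := hy.2; linarith
              · apply lintegral_mono'
                · apply Measure.restrict_mono _ le_rfl
                  intro t ht
                  exact ⟨lt_of_lt_of_le hx.1 ht.1.le, lt_of_le_of_lt ht.2 hy.2⟩
                · exact le_rfl
      intro x hx y hy
      rcases le_total x y with h | h
      · exact key x hx y hy h
      · rw [abs_sub_comm]
        exact key y hy x hx h
    -- realified data
    obtain ⟨Ir, hIr0, hIrEq⟩ : ∃ t : ℝ, 0 ≤ t ∧ I = ENNReal.ofReal t :=
      ⟨I.toReal, ENNReal.toReal_nonneg, (ENNReal.ofReal_toReal hI_ne).symm⟩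
    obtain ⟨Er, hEr0, hErEq⟩ : ∃ t : ℝ, 0 ≤ t ∧ E = ENNReal.ofReal t :=
      ⟨E.toReal, ENNReal.toReal_nonneg, (ENNReal.ofReal_toReal hE_ne).symm⟩
    obtain ⟨K, hK_def⟩ : ∃ x : ℝ, x = 2 ^ (p - 1) * (Ir + (b - a) ^ (p - 1) * Er * (b - a)) / (b - a) :=
      ⟨_, rfl⟩
    have hK0 : 0 ≤ K := by rw [hK_def]; positivity
    -- pointwise bound for y
    have hpt : ∀ y ∈ Set.Ioo c b, ENNReal.ofReal (|u y| ^ p) ≤ ENNReal.ofReal K := by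
      intro y hy
      have hy' : y ∈ Set.Ioo a b := ⟨lt_of_le_of_lt hac hy.1, hy.2⟩
      have step : ∀ x ∈ Set.Ioo a b, ENNReal.ofReal (|u y| ^ p) ≤
          ENNReal.ofReal (2 ^ (p - 1)) * (ENNReal.ofReal (|u x| ^ p) +
            ENNReal.ofReal ((b - a) ^ (p - 1)) * E) := by
        intro x hx
        have htri : |u y| ≤ |u x| + |u y - u x| := by
          have := abs_sub_abs_le_abs_sub (u y) (u x)
          linarith [abs_nonneg (u y - u x)]
        calc ENNReal.ofReal (|u y| ^ p)
            ≤ ENNReal.ofReal (2 ^ (p - 1)) *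
                (ENNReal.ofReal (|u x| ^ p) + ENNReal.ofReal (|u y - u x| ^ p)) :=
              two_point' htri (abs_nonneg _) (abs_nonneg _) (by linarith)
          _ ≤ _ := by
              apply mul_le_mul'
              · exact le_rfl
              · exact add_le_add le_rfl (hFTC x hx y hy')
      -- integrate in x over Ioo a b
      have hint : ENNReal.ofReal (|u y| ^ p) * ENNReal.ofReal (b - a) ≤
          ENNReal.ofReal (2 ^ (p - 1)) *
            (I + (ENNReal.ofReal ((b - a) ^ (p - 1)) * E) * ENNReal.ofReal (b - a)) := by
        have h1 : ENNReal.ofReal (|u y| ^ p) * ENNReal.ofReal (b - a) =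
            ∫⁻ _ in Set.Ioo a b, ENNReal.ofReal (|u y| ^ p) := by
          rw [setLIntegral_const, Real.volume_Ioo]
        rw [h1]
        calc (∫⁻ x in Set.Ioo a b, ENNReal.ofReal (|u y| ^ p))
            ≤ ∫⁻ x in Set.Ioo a b, ENNReal.ofReal (2 ^ (p - 1)) *
                (ENNReal.ofReal (|u x| ^ p) + ENNReal.ofReal ((b - a) ^ (p - 1)) * E) :=
              setLIntegral_mono_ae' measurableSet_Ioo (Filter.Eventually.of_forall
                fun x hx => step x hx)
          _ = ENNReal.ofReal (2 ^ (p - 1)) *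
              (I + (ENNReal.ofReal ((b - a) ^ (p - 1)) * E) * ENNReal.ofReal (b - a)) := by
              rw [lintegral_const_mul' _ _ ENNReal.ofReal_ne_top]
              congr 1
              rw [lintegral_add_right' _ aemeasurable_const, setLIntegral_const, Real.volume_Ioo]
      have hint2 : ENNReal.ofReal (|u y| ^ p * (b - a)) ≤
          ENNReal.ofReal (2 ^ (p - 1) * (Ir + (b - a) ^ (p - 1) * Er * (b - a))) := by
        calc ENNReal.ofReal (|u y| ^ p * (b - a))
            = ENNReal.ofReal (|u y| ^ p) * ENNReal.ofReal (b - a) :=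
              ENNReal.ofReal_mul (by positivity)
          _ ≤ ENNReal.ofReal (2 ^ (p - 1)) *
              (I + (ENNReal.ofReal ((b - a) ^ (p - 1)) * E) * ENNReal.ofReal (b - a)) := hint
          _ = ENNReal.ofReal (2 ^ (p - 1) * (Ir + (b - a) ^ (p - 1) * Er * (b - a))) := by
              rw [hIrEq, hErEq, ← ENNReal.ofReal_mul (by positivity),
                ← ENNReal.ofReal_mul (by positivity),
                ← ENNReal.ofReal_add hIr0 (by positivity),
                ← ENNReal.ofReal_mul (by positivity)]
      have hreal : |u y| ^ p * (b - a) ≤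
          2 ^ (p - 1) * (Ir + (b - a) ^ (p - 1) * Er * (b - a)) :=
        (ENNReal.ofReal_le_ofReal_iff (by positivity)).1 hint2
      have hKb : |u y| ^ p ≤ K := by
        rw [hK_def, le_div_iff₀ hba]
        exact hreal
      exact ENNReal.ofReal_le_ofReal hKb
    -- final assembly for s = 1
    calc ENNReal.ofReal (1 / (b - c)) * ∫⁻ y in Set.Ioo c b, ENNReal.ofReal (|u y| ^ p)
        ≤ ENNReal.ofReal (1 / (b - c)) * (ENNReal.ofReal K * ENNReal.ofReal (b - c)) := by
          apply mul_le_mul' le_rfl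
          calc (∫⁻ y in Set.Ioo c b, ENNReal.ofReal (|u y| ^ p))
              ≤ ∫⁻ _ in Set.Ioo c b, ENNReal.ofReal K :=
                setLIntegral_mono_ae' measurableSet_Ioo
                  (Filter.Eventually.of_forall fun y hy => hpt y hy)
            _ = ENNReal.ofReal K * ENNReal.ofReal (b - c) := by
                rw [setLIntegral_const, Real.volume_Ioo]
      _ = ENNReal.ofReal (1 / (b - c) * (K * (b - c))) := by
          rw [← ENNReal.ofReal_mul hK0, ← ENNReal.ofReal_mul (by positivity)]
      _ = ENNReal.ofReal K := by
          rw [show 1 / (b - c) * (K * (b - c)) = K by field_simp]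
      _ ≤ ENNReal.ofReal (C1 + C2) * (I + E) := by
          rw [hIrEq, hErEq, ← ENNReal.ofReal_add hIr0 hEr0, ← ENNReal.ofReal_mul hCpos.le]
          apply ENNReal.ofReal_le_ofReal
          rw [hK_def, div_le_iff₀ hba]
          have h2p : (0:ℝ) < 2 ^ (p - 1) := by positivity
          have hbap : (0:ℝ) < (b - a) ^ (p - 1) := by positivity
          have hC1ba : C1 * (b - a) = 2 ^ (p - 1) + 2 ^ (p - 1) * (b - a) ^ (p - 1) * (b - a) := by
            rw [hC1_def]
            field_simp
          have hstep1 : 2 ^ (p - 1) * (Ir + (b - a) ^ (p - 1) * Er * (b - a)) ≤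
              (C1 * (b - a)) * (Ir + Er) := by
            rw [hC1ba]
            nlinarith [mul_nonneg h2p.le hIr0, mul_nonneg h2p.le hEr0,
              mul_nonneg (mul_nonneg (mul_nonneg h2p.le hbap.le) hba.le) hIr0,
              mul_nonneg (mul_nonneg (mul_nonneg h2p.le hbap.le) hba.le) hEr0]
          have hstep2 : (C1 * (b - a)) * (Ir + Er) ≤ (C1 + C2) * (Ir + Er) * (b - a) := by
            have h1 : (C1 * (b - a)) * (Ir + Er) = C1 * (Ir + Er) * (b - a) := by ring
            rw [h1]
            have h2 : 0 ≤ (Ir + Er) * (b - a) := by positivity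
            nlinarith [mul_nonneg hC2.le h2]
          linarith
  · -- fractional case s < 1
    rw [if_neg hseq]
    set J := ∫⁻ x in Set.Ioo a b, ∫⁻ y in Set.Ioo a b,
        ENNReal.ofReal (|u x - u y| ^ p / |x - y| ^ (1 + s * p)) with hJ_def
    by_cases htop : I + J = ⊤
    · rw [htop, ENNReal.mul_top (ENNReal.ofReal_pos.2 hCpos).ne']
      exact le_top
    have hI_ne : I ≠ ⊤ := fun h => htop (by simp [h])
    have hJ_ne : J ≠ ⊤ := fun h => htop (by simp [h])
    obtain ⟨Ir, hIr0, hIrEq⟩ : ∃ t : ℝ, 0 ≤ t ∧ I = ENNReal.ofReal t :=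
      ⟨I.toReal, ENNReal.toReal_nonneg, (ENNReal.ofReal_toReal hI_ne).symm⟩
    obtain ⟨Jr, hJr0, hJrEq⟩ : ∃ t : ℝ, 0 ≤ t ∧ J = ENNReal.ofReal t :=
      ⟨J.toReal, ENNReal.toReal_nonneg, (ENNReal.ofReal_toReal hJ_ne).symm⟩
    obtain ⟨Bv, hBv_def⟩ : ∃ F : ℝ → ℝ, F = fun γ => (b - γ)⁻¹ * ∫ x in Set.Ioo γ b, u x :=
      ⟨_, rfl⟩
    have h1sp : (0:ℝ) < 1 + s * p := by linarith
    -- oscillation bound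
    have hosc : ∀ γ, a ≤ γ → γ < b → ∀ x ∈ Set.Ioo γ b,
        ENNReal.ofReal (|u x - Bv γ| ^ p) ≤ ENNReal.ofReal ((b - γ) ^ (s * p)) *
          ∫⁻ y in Set.Ioo γ b, ENNReal.ofReal (|u x - u y| ^ p / |x - y| ^ (1 + s * p)) := by
      intro γ hγa hγb x hx
      have hδγ : 0 < b - γ := by linarith
      have hsub : Set.Ioo γ b ⊆ Set.Icc a b := fun z hz => ⟨le_trans hγa hz.1.le, hz.2.le⟩
      have huint : IntegrableOn u (Set.Ioo γ b) := hu_int.mono_set hsub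
      have humeas : AEMeasurable u (volume.restrict (Set.Ioo γ b)) :=
        (hu_cont.mono hsub).aemeasurable measurableSet_Ioo
      have hdiffint : ∫ y in Set.Ioo γ b, (u x - u y) =
          (b - γ) * u x - ∫ y in Set.Ioo γ b, u y := by
        rw [integral_sub (integrableOn_const
            (by rw [Real.volume_Ioo]; exact ENNReal.ofReal_ne_top) :
              IntegrableOn (fun _ : ℝ => u x) (Set.Ioo γ b) volume) huint]
        congr 1
        rw [setIntegral_const, measureReal_def, Real.volume_Ioo, ENNReal.toReal_ofReal hδγ.le, smul_eq_mul]
      have hrep : u x - Bv γ = (b - γ)⁻¹ * ∫ y in Set.Ioo γ b, (u x - u y) := by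
        rw [hdiffint, hBv_def]
        field_simp
      calc ENNReal.ofReal (|u x - Bv γ| ^ p)
          = ENNReal.ofReal (((b - γ)⁻¹) ^ p) *
              ENNReal.ofReal |∫ y in Set.Ioo γ b, (u x - u y)| ^ p := by
            rw [hrep, abs_mul, abs_of_nonneg (inv_nonneg.2 hδγ.le),
              Real.mul_rpow (by positivity) (abs_nonneg _),
              ENNReal.ofReal_mul (by positivity),
              ENNReal.ofReal_rpow_of_nonneg (abs_nonneg _) hp0.le]
        _ ≤ ENNReal.ofReal (((b - γ)⁻¹) ^ p) * ((volume (Set.Ioo γ b)) ^ (p - 1) *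
              ∫⁻ y in Set.Ioo γ b, ENNReal.ofReal (|u x - u y| ^ p)) :=
            mul_le_mul' le_rfl (helperA hp1 _ (aemeasurable_const.sub humeas))
        _ ≤ ENNReal.ofReal (((b - γ)⁻¹) ^ p) * (ENNReal.ofReal ((b - γ) ^ (p - 1)) *
              (ENNReal.ofReal ((b - γ) ^ (1 + s * p)) *
                ∫⁻ y in Set.Ioo γ b,
                  ENNReal.ofReal (|u x - u y| ^ p / |x - y| ^ (1 + s * p)))) := by
            apply mul_le_mul' le_rfl
            apply mul_le_mul'
            · apply le_of_eq
              rw [Real.volume_Ioo, ENNReal.ofReal_rpow_of_nonneg hδγ.le (by linarith)]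
            · rw [← lintegral_const_mul' _ _ ENNReal.ofReal_ne_top]
              apply setLIntegral_mono_ae' measurableSet_Ioo
              refine Filter.Eventually.of_forall fun y hy => ?_
              rw [← ENNReal.ofReal_mul (by positivity)]
              apply ENNReal.ofReal_le_ofReal
              refine qb (by positivity) (abs_nonneg _) ?_ h1sp ?_
              · rw [abs_sub_le_iff]
                constructor <;> [skip; skip] <;>
                  · have h1 := hx.1; have h2 := hx.2; have h3 := hy.1; have h4 := hy.2
                    linarith
              · intro h0
                have hxy : x = y := by
                  have := abs_eq_zero.1 h0
                  linarith
                rw [hxy, sub_self, abs_zero, Real.zero_rpow hp0.ne']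
        _ = ENNReal.ofReal ((b - γ) ^ (s * p)) *
              ∫⁻ y in Set.Ioo γ b,
                ENNReal.ofReal (|u x - u y| ^ p / |x - y| ^ (1 + s * p)) := by
            rw [← mul_assoc, ← mul_assoc, ← ENNReal.ofReal_mul (by positivity),
              ← ENNReal.ofReal_mul (by positivity)]
            congr 2
            rw [← Real.rpow_neg_one (b - γ), ← Real.rpow_mul hδγ.le,
              ← Real.rpow_add hδγ, ← Real.rpow_add hδγ]
            congr 1
            ring
    -- chain step bound
    have hchain : ∀ c' c'', a ≤ c' → c' ≤ c'' → c'' < b →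
        ENNReal.ofReal (|Bv c'' - Bv c'| ^ p) ≤
          ENNReal.ofReal ((b - c'')⁻¹ * (b - c') ^ (s * p)) * J := by
      intro c' c'' hac' hcc hc''b
      have hδ2 : 0 < b - c'' := by linarith
      have hδ1 : 0 < b - c' := by linarith
      have hsub2 : Set.Ioo c'' b ⊆ Set.Icc a b := fun z hz =>
        ⟨by have := hz.1; linarith, hz.2.le⟩
      have huint2 : IntegrableOn u (Set.Ioo c'' b) := hu_int.mono_set hsub2
      have humeas2 : AEMeasurable u (volume.restrict (Set.Ioo c'' b)) :=
        (hu_cont.mono hsub2).aemeasurable measurableSet_Ioo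
      have hdiffint : ∫ x in Set.Ioo c'' b, (u x - Bv c') =
          (∫ x in Set.Ioo c'' b, u x) - (b - c'') * Bv c' := by
        rw [integral_sub huint2 (integrableOn_const
            (by rw [Real.volume_Ioo]; exact ENNReal.ofReal_ne_top) :
              IntegrableOn (fun _ : ℝ => Bv c') (Set.Ioo c'' b) volume)]
        congr 1
        rw [setIntegral_const, measureReal_def, Real.volume_Ioo, ENNReal.toReal_ofReal hδ2.le, smul_eq_mul]
      have hrep : Bv c'' - Bv c' = (b - c'')⁻¹ * ∫ x in Set.Ioo c'' b, (u x - Bv c') := by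
        rw [hdiffint]
        have hBc'' : Bv c'' = (b - c'')⁻¹ * ∫ x in Set.Ioo c'' b, u x := by rw [hBv_def]
        rw [hBc'']
        field_simp
      calc ENNReal.ofReal (|Bv c'' - Bv c'| ^ p)
          = ENNReal.ofReal (((b - c'')⁻¹) ^ p) *
              ENNReal.ofReal |∫ x in Set.Ioo c'' b, (u x - Bv c')| ^ p := by
            rw [hrep, abs_mul, abs_of_nonneg (inv_nonneg.2 hδ2.le),
              Real.mul_rpow (by positivity) (abs_nonneg _),
              ENNReal.ofReal_mul (by positivity),
              ENNReal.ofReal_rpow_of_nonneg (abs_nonneg _) hp0.le]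
        _ ≤ ENNReal.ofReal (((b - c'')⁻¹) ^ p) * ((volume (Set.Ioo c'' b)) ^ (p - 1) *
              ∫⁻ x in Set.Ioo c'' b, ENNReal.ofReal (|u x - Bv c'| ^ p)) :=
            mul_le_mul' le_rfl (helperA hp1 _ (humeas2.sub aemeasurable_const))
        _ ≤ ENNReal.ofReal (((b - c'')⁻¹) ^ p) * (ENNReal.ofReal ((b - c'') ^ (p - 1)) *
              (ENNReal.ofReal ((b - c') ^ (s * p)) * J)) := by
            apply mul_le_mul' le_rfl
            apply mul_le_mul'
            · apply le_of_eq
              rw [Real.volume_Ioo, ENNReal.ofReal_rpow_of_nonneg hδ2.le (by linarith)]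
            · calc (∫⁻ x in Set.Ioo c'' b, ENNReal.ofReal (|u x - Bv c'| ^ p))
                  ≤ ∫⁻ x in Set.Ioo c'' b, ENNReal.ofReal ((b - c') ^ (s * p)) *
                      ∫⁻ y in Set.Ioo c' b,
                        ENNReal.ofReal (|u x - u y| ^ p / |x - y| ^ (1 + s * p)) := by
                    apply setLIntegral_mono_ae' measurableSet_Ioo
                    refine Filter.Eventually.of_forall fun x hx => ?_
                    exact hosc c' hac' (by linarith) x ⟨by have := hx.1; linarith, hx.2⟩
                _ = ENNReal.ofReal ((b - c') ^ (s * p)) * ∫⁻ x in Set.Ioo c'' b,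
                      ∫⁻ y in Set.Ioo c' b,
                        ENNReal.ofReal (|u x - u y| ^ p / |x - y| ^ (1 + s * p)) :=
                    lintegral_const_mul' _ _ ENNReal.ofReal_ne_top
                _ ≤ ENNReal.ofReal ((b - c') ^ (s * p)) * J := by
                    apply mul_le_mul' le_rfl
                    rw [hJ_def]
                    exact lintegral_mono'
                      (Measure.restrict_mono (Set.Ioo_subset_Ioo_left (le_trans hac' hcc)) le_rfl)
                      (fun x => lintegral_mono'
                        (Measure.restrict_mono (Set.Ioo_subset_Ioo_left hac') le_rfl) le_rfl)
        _ = ENNReal.ofReal ((b - c'')⁻¹ * (b - c') ^ (s * p)) * J := by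
            rw [← mul_assoc, ← mul_assoc, ← ENNReal.ofReal_mul (by positivity),
              ← ENNReal.ofReal_mul (by positivity)]
            congr 3
            rw [← Real.rpow_neg_one (b - c''), ← Real.rpow_mul hδ2.le, ← Real.rpow_add hδ2]
            rw [show (-1:ℝ) * p + (p - 1) = -1 by ring, Real.rpow_neg_one]
    -- bound on the global average
    have hBa : ENNReal.ofReal (|Bv a| ^ p) ≤ ENNReal.ofReal ((b - a)⁻¹) * I := by
      have humeas : AEMeasurable u (volume.restrict (Set.Ioo a b)) :=
        (hu_cont.mono Set.Ioo_subset_Icc_self).aemeasurable measurableSet_Ioo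
      have hBa' : Bv a = (b - a)⁻¹ * ∫ x in Set.Ioo a b, u x := by rw [hBv_def]
      calc ENNReal.ofReal (|Bv a| ^ p)
          = ENNReal.ofReal (((b - a)⁻¹) ^ p) *
              ENNReal.ofReal |∫ x in Set.Ioo a b, u x| ^ p := by
            rw [hBa', abs_mul, abs_of_nonneg (inv_nonneg.2 hba.le),
              Real.mul_rpow (by positivity) (abs_nonneg _),
              ENNReal.ofReal_mul (by positivity),
              ENNReal.ofReal_rpow_of_nonneg (abs_nonneg _) hp0.le]
        _ ≤ ENNReal.ofReal (((b - a)⁻¹) ^ p) * ((volume (Set.Ioo a b)) ^ (p - 1) *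
              ∫⁻ x in Set.Ioo a b, ENNReal.ofReal (|u x| ^ p)) :=
            mul_le_mul' le_rfl (helperA hp1 _ humeas)
        _ = ENNReal.ofReal ((b - a)⁻¹) * I := by
            rw [Real.volume_Ioo, ENNReal.ofReal_rpow_of_nonneg hba.le (by linarith),
              ← mul_assoc, ← ENNReal.ofReal_mul (by positivity), hI_def]
            congr 2
            rw [← Real.rpow_neg_one (b - a), ← Real.rpow_mul hba.le, ← Real.rpow_add hba]
            rw [show (-1:ℝ) * p + (p - 1) = -1 by ring, Real.rpow_neg_one]
    -- realified versions
    have hchainR : ∀ c' c'', a ≤ c' → c' ≤ c'' → c'' < b →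
        |Bv c'' - Bv c'| ^ p ≤ (b - c'')⁻¹ * (b - c') ^ (s * p) * Jr := by
      intro c' c'' h1 h2 h3
      have hδ2 : 0 < b - c'' := by linarith
      have hδ1 : (0:ℝ) ≤ b - c' := by linarith
      have hnn : (0:ℝ) ≤ (b - c'')⁻¹ * (b - c') ^ (s * p) :=
        mul_nonneg (inv_nonneg.2 hδ2.le) (Real.rpow_nonneg hδ1 _)
      have := hchain c' c'' h1 h2 h3
      rw [hJrEq, ← ENNReal.ofReal_mul hnn] at this
      exact (ENNReal.ofReal_le_ofReal_iff (mul_nonneg hnn hJr0)).1 this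
    have hBaR : |Bv a| ^ p ≤ (b - a)⁻¹ * Ir := by
      have hnn : (0:ℝ) ≤ (b - a)⁻¹ := inv_nonneg.2 hba.le
      have := hBa
      rw [hIrEq, ← ENNReal.ofReal_mul hnn] at this
      exact (ENNReal.ofReal_le_ofReal_iff (mul_nonneg hnn hIr0)).1 this
    -- constants for the induction
    obtain ⟨A0, hA0_def⟩ : ∃ x : ℝ, x = ((b - a)⁻¹ * Ir) ^ (1/p) := ⟨_, rfl⟩
    have hA00 : 0 ≤ A0 := by rw [hA0_def]; positivity
    obtain ⟨M1, hM1_def⟩ : ∃ x : ℝ, x = (M0 * Jr) ^ (1/p) := ⟨_, rfl⟩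
    have hM10 : 0 ≤ M1 := by rw [hM1_def]; positivity
    have hM1p : M1 ^ p = M0 * Jr := by
      rw [hM1_def, one_div, Real.rpow_inv_rpow (by positivity) hp0.ne']
    -- the induction
    have hind : ∀ n : ℕ, ∀ γ, a ≤ γ → γ < b → b - a ≤ 2 ^ n * (b - γ) →
        |Bv γ| ≤ A0 + M1 * ∑ i ∈ Finset.range n, r ^ i := by
      intro n
      induction n with
      | zero =>
        intro γ hγa hγb hbound
        simp only [pow_zero, one_mul] at hbound
        have hγeq : γ = a := le_antisymm (by linarith) hγa
        subst hγeq
        simp only [Finset.range_zero, Finset.sum_empty, mul_zero, add_zero]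
        rw [hA0_def]
        calc |Bv γ| = (|Bv γ| ^ p) ^ (1/p) := by
              rw [one_div, Real.rpow_rpow_inv (abs_nonneg _) hp0.ne']
          _ ≤ ((b - γ)⁻¹ * Ir) ^ (1/p) :=
              Real.rpow_le_rpow (by positivity) hBaR (by positivity)
      | succ n ih =>
        intro γ hγa hγb hbound
        by_cases hcase : b - a ≤ 2 ^ n * (b - γ)
        · refine le_trans (ih γ hγa hγb hcase) ?_
          have hsum : ∑ i ∈ Finset.range n, r ^ i ≤ ∑ i ∈ Finset.range (n+1), r ^ i :=
            Finset.sum_le_sum_of_subset_of_nonneg (Finset.range_subset_range.2 (Nat.le_succ n))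
              (fun i _ _ => by positivity)
          have := mul_le_mul_of_nonneg_left hsum hM10
          linarith
        · push_neg at hcase
          have hδγ : 0 < b - γ := by linarith
          have h2n0 : (0:ℝ) < 2 ^ n := by positivity
          obtain ⟨γ', hγ'_def⟩ : ∃ x : ℝ, x = max a (b - 2 * (b - γ)) := ⟨_, rfl⟩
          have hγ'a : a ≤ γ' := by rw [hγ'_def]; exact le_max_left _ _
          have hγ'γ : γ' ≤ γ := by
            rw [hγ'_def]
            apply max_le hγa
            linarith
          have hγ'b : γ' < b := by
            rw [hγ'_def]
            apply max_lt hab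
            linarith
          have hδ'le : b - γ' ≤ 2 * (b - γ) := by
            have := le_max_right a (b - 2 * (b - γ))
            rw [hγ'_def]
            linarith
          have hIH : |Bv γ'| ≤ A0 + M1 * ∑ i ∈ Finset.range n, r ^ i := by
            apply ih γ' hγ'a hγ'b
            rcases le_total a (b - 2 * (b - γ)) with hm | hm
            · have hg : γ' = b - 2 * (b - γ) := by rw [hγ'_def]; exact max_eq_right hm
              rw [hg]
              have hb2 : (2:ℝ) ^ (n+1) * (b - γ) = 2 ^ n * (2 * (b - γ)) := by ring
              rw [hb2] at hbound
              linarith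
            · have hg : γ' = a := by rw [hγ'_def]; exact max_eq_left hm
              rw [hg]
              have h2n1 : (1:ℝ) ≤ 2 ^ n := one_le_pow₀ (by norm_num)
              nlinarith
          have hδle : b - γ ≤ (b - a) / 2 ^ n := by
            rw [le_div_iff₀ h2n0]
            nlinarith
          -- chain step
          have hstep : |Bv γ - Bv γ'| ≤ M1 * r ^ n := by
            have h1 : |Bv γ - Bv γ'| ^ p ≤ (b - γ)⁻¹ * (b - γ') ^ (s * p) * Jr :=
              hchainR γ' γ hγ'a hγ'γ hγb
            have hrnp : (r ^ n) ^ p = ((2:ℝ) ^ ((n:ℝ) * e))⁻¹ := by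
              rw [hr_def, ← Real.rpow_natCast ((2:ℝ) ^ (e/p))⁻¹ n,
                ← Real.rpow_neg (by norm_num : (0:ℝ) ≤ 2) (e/p),
                ← Real.rpow_mul (by norm_num : (0:ℝ) ≤ 2),
                ← Real.rpow_mul (by norm_num : (0:ℝ) ≤ 2),
                ← Real.rpow_neg (by norm_num : (0:ℝ) ≤ 2)]
              congr 1
              have hpp : e / p * p = e := div_mul_cancel₀ e hp0.ne'
              linear_combination (-(n:ℝ)) * hpp
            have hkey : (b - γ) ^ e ≤ (b - a) ^ e * ((2:ℝ) ^ ((n:ℝ) * e))⁻¹ := by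
              have h1' : (b - γ) ^ e ≤ ((b - a) / 2 ^ n) ^ e :=
                Real.rpow_le_rpow hδγ.le hδle he.le
              have h2' : ((b - a) / (2:ℝ) ^ n) ^ e =
                  (b - a) ^ e * ((2:ℝ) ^ ((n:ℝ) * e))⁻¹ := by
                rw [Real.div_rpow hba.le (by positivity),
                  ← Real.rpow_natCast (2:ℝ) n, ← Real.rpow_mul (by norm_num : (0:ℝ) ≤ 2),
                  div_eq_mul_inv]
              linarith [h2' ▸ h1']
            have h2 : (b - γ)⁻¹ * (b - γ') ^ (s * p) * Jr ≤ (M1 * r ^ n) ^ p := by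
              have hA : (b - γ') ^ (s * p) ≤ 2 ^ (s * p) * (b - γ) ^ (s * p) := by
                rw [← Real.mul_rpow (by norm_num) hδγ.le]
                exact Real.rpow_le_rpow (by linarith) hδ'le hsp0.le
              have hB : (b - γ)⁻¹ * (b - γ) ^ (s * p) = (b - γ) ^ e := by
                rw [he_def, ← Real.rpow_neg_one (b - γ), ← Real.rpow_add hδγ]
                congr 1
                ring
              calc (b - γ)⁻¹ * (b - γ') ^ (s * p) * Jr
                  ≤ (b - γ)⁻¹ * (2 ^ (s * p) * (b - γ) ^ (s * p)) * Jr := by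
                    apply mul_le_mul_of_nonneg_right _ hJr0
                    exact mul_le_mul_of_nonneg_left hA (inv_nonneg.2 hδγ.le)
                _ = 2 ^ (s * p) * ((b - γ)⁻¹ * (b - γ) ^ (s * p)) * Jr := by ring
                _ = 2 ^ (s * p) * (b - γ) ^ e * Jr := by rw [hB]
                _ ≤ 2 ^ (s * p) * ((b - a) ^ e * ((2:ℝ) ^ ((n:ℝ) * e))⁻¹) * Jr := by
                    apply mul_le_mul_of_nonneg_right _ hJr0
                    exact mul_le_mul_of_nonneg_left hkey (by positivity)
                _ = (M1 * r ^ n) ^ p := by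
                    rw [Real.mul_rpow hM10 (by positivity), hM1p, hrnp, hM0_def]
                    ring
            calc |Bv γ - Bv γ'| = (|Bv γ - Bv γ'| ^ p) ^ (1/p) := by
                  rw [one_div, Real.rpow_rpow_inv (abs_nonneg _) hp0.ne']
              _ ≤ ((M1 * r ^ n) ^ p) ^ (1/p) :=
                  Real.rpow_le_rpow (by positivity) (h1.trans h2) (by positivity)
              _ = M1 * r ^ n := by
                  rw [one_div, Real.rpow_rpow_inv (by positivity) hp0.ne']
          calc |Bv γ| ≤ |Bv γ'| + |Bv γ - Bv γ'| := by
                have := abs_sub_abs_le_abs_sub (Bv γ) (Bv γ')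
                linarith
            _ ≤ A0 + M1 * ∑ i ∈ Finset.range n, r ^ i + M1 * r ^ n := add_le_add hIH hstep
            _ = A0 + M1 * ∑ i ∈ Finset.range (n+1), r ^ i := by
                rw [Finset.sum_range_succ]
                ring
    -- uniform bound on |Bv c|
    obtain ⟨Bd, hBd_def⟩ : ∃ x : ℝ, x = A0 + M1 * (1 - r)⁻¹ := ⟨_, rfl⟩
    have h1r : 0 < 1 - r := by linarith
    have hBd0 : 0 ≤ Bd := by rw [hBd_def]; positivity
    have hBvc : |Bv c| ≤ Bd := by
      obtain ⟨n, hn⟩ := pow_unbounded_of_one_lt ((b - a) / (b - c)) (by norm_num : (1:ℝ) < 2)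
      have hbound : b - a ≤ 2 ^ n * (b - c) := by
        rw [div_lt_iff₀ hδ] at hn
        linarith
      refine le_trans (hind n c hac hcb hbound) ?_
      rw [hBd_def]
      have := mul_le_mul_of_nonneg_left (geom_bound hr0.le hr1 n) hM10
      linarith
    have hBdp : Bd ^ p ≤ 2 ^ (p - 1) * ((b - a)⁻¹ * Ir + (1 - r)⁻¹ ^ p * (M0 * Jr)) := by
      rw [hBd_def]
      calc (A0 + M1 * (1 - r)⁻¹) ^ p
          ≤ 2 ^ (p - 1) * (A0 ^ p + (M1 * (1 - r)⁻¹) ^ p) :=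
            two_point hA00 (by positivity) (by linarith)
        _ = 2 ^ (p - 1) * ((b - a)⁻¹ * Ir + (1 - r)⁻¹ ^ p * (M0 * Jr)) := by
            rw [hA0_def, one_div, Real.rpow_inv_rpow (by positivity) hp0.ne',
              Real.mul_rpow hM10 (by positivity), hM1p]
            ring
    -- final assembly
    have hBvcp : |Bv c| ^ p ≤ Bd ^ p := Real.rpow_le_rpow (abs_nonneg _) hBvc hp0.le
    have hδsp' : (b - c) ^ (s * p) = (b - c) ^ e * (b - c) := by
      rw [show s * p = e + 1 by rw [he_def]; ring, Real.rpow_add hδ, Real.rpow_one]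
    have hδe : (b - c) ^ e ≤ (b - a) ^ e := Real.rpow_le_rpow hδ.le (by linarith) he.le
    have h2p : (0:ℝ) < 2 ^ (p - 1) := by positivity
    have hfinal : 1 / (b - c) * (2 ^ (p - 1) * ((b - c) ^ (s * p) * Jr + Bd ^ p * (b - c))) ≤
        (C1 + C2) * (Ir + Jr) := by
      have hexp : 1 / (b - c) * (2 ^ (p - 1) * ((b - c) ^ (s * p) * Jr + Bd ^ p * (b - c))) =
          2 ^ (p - 1) * ((b - c) ^ e * Jr) + 2 ^ (p - 1) * Bd ^ p := by
        rw [hδsp']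
        field_simp
      rw [hexp]
      have t1 : 2 ^ (p - 1) * ((b - c) ^ e * Jr) ≤ 2 ^ (p - 1) * ((b - a) ^ e * Jr) :=
        mul_le_mul_of_nonneg_left (mul_le_mul_of_nonneg_right hδe hJr0) h2p.le
      have t2 : 2 ^ (p - 1) * Bd ^ p ≤
          2 ^ (p - 1) * (2 ^ (p - 1) * ((b - a)⁻¹ * Ir + (1 - r)⁻¹ ^ p * (M0 * Jr))) :=
        mul_le_mul_of_nonneg_left hBdp h2p.le
      have hk1 : (0:ℝ) ≤ 2 ^ (p - 1) * (b - a) ^ e := by positivity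
      have hk2 : (0:ℝ) ≤ 2 ^ (p - 1) * 2 ^ (p - 1) * (b - a)⁻¹ := by positivity
      have hk3 : (0:ℝ) ≤ 2 ^ (p - 1) * 2 ^ (p - 1) * ((1 - r)⁻¹ ^ p * M0) := by positivity
      have hsum : 2 ^ (p - 1) * ((b - a) ^ e * Jr) +
          2 ^ (p - 1) * (2 ^ (p - 1) * ((b - a)⁻¹ * Ir + (1 - r)⁻¹ ^ p * (M0 * Jr))) ≤
          C2 * (Ir + Jr) := by
        calc 2 ^ (p - 1) * ((b - a) ^ e * Jr) +
            2 ^ (p - 1) * (2 ^ (p - 1) * ((b - a)⁻¹ * Ir + (1 - r)⁻¹ ^ p * (M0 * Jr)))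
            = (2 ^ (p - 1) * (b - a) ^ e) * Jr +
              ((2 ^ (p - 1) * 2 ^ (p - 1) * (b - a)⁻¹) * Ir +
                (2 ^ (p - 1) * 2 ^ (p - 1) * ((1 - r)⁻¹ ^ p * M0)) * Jr) := by ring
          _ ≤ (2 ^ (p - 1) * (b - a) ^ e + 2 ^ (p - 1) * 2 ^ (p - 1) * (b - a)⁻¹ +
                2 ^ (p - 1) * 2 ^ (p - 1) * ((1 - r)⁻¹ ^ p * M0)) * (Ir + Jr) :=
              coeff_sum hk1 hk2 hk3 hIr0 hJr0
          _ = C2 * (Ir + Jr) := by rw [hC2_def]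
      have hlast : C2 * (Ir + Jr) ≤ (C1 + C2) * (Ir + Jr) :=
        mul_le_mul_of_nonneg_right (le_add_of_nonneg_left hC1.le) (add_nonneg hIr0 hJr0)
      linarith
    calc ENNReal.ofReal (1 / (b - c)) * ∫⁻ y in Set.Ioo c b, ENNReal.ofReal (|u y| ^ p)
        ≤ ENNReal.ofReal (1 / (b - c)) * ∫⁻ y in Set.Ioo c b,
            (ENNReal.ofReal (2 ^ (p - 1)) *
              (ENNReal.ofReal (|u y - Bv c| ^ p) + ENNReal.ofReal (Bd ^ p))) := by
          apply mul_le_mul' le_rfl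
          apply setLIntegral_mono_ae' measurableSet_Ioo
          refine Filter.Eventually.of_forall fun y hy => ?_
          have htri : |u y| ≤ |u y - Bv c| + |Bv c| := by
            have h := abs_add_le (u y - Bv c) (Bv c)
            rw [sub_add_cancel] at h
            exact h
          calc ENNReal.ofReal (|u y| ^ p)
              ≤ ENNReal.ofReal (2 ^ (p - 1)) *
                  (ENNReal.ofReal (|u y - Bv c| ^ p) + ENNReal.ofReal (|Bv c| ^ p)) :=
                two_point' htri (abs_nonneg _) (abs_nonneg _) (by linarith)
            _ ≤ _ := by
                apply mul_le_mul' le_rfl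
                exact add_le_add le_rfl (ENNReal.ofReal_le_ofReal hBvcp)
      _ = ENNReal.ofReal (1 / (b - c)) * (ENNReal.ofReal (2 ^ (p - 1)) *
            ((∫⁻ y in Set.Ioo c b, ENNReal.ofReal (|u y - Bv c| ^ p)) +
              ENNReal.ofReal (Bd ^ p) * ENNReal.ofReal (b - c))) := by
          rw [lintegral_const_mul' _ _ ENNReal.ofReal_ne_top,
            lintegral_add_right' _ aemeasurable_const, setLIntegral_const, Real.volume_Ioo]
      _ ≤ ENNReal.ofReal (1 / (b - c)) * (ENNReal.ofReal (2 ^ (p - 1)) *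
            (ENNReal.ofReal ((b - c) ^ (s * p)) * ENNReal.ofReal Jr +
              ENNReal.ofReal (Bd ^ p) * ENNReal.ofReal (b - c))) := by
          apply mul_le_mul' le_rfl
          apply mul_le_mul' le_rfl
          apply add_le_add _ le_rfl
          calc (∫⁻ y in Set.Ioo c b, ENNReal.ofReal (|u y - Bv c| ^ p))
              ≤ ∫⁻ y in Set.Ioo c b, ENNReal.ofReal ((b - c) ^ (s * p)) *
                  ∫⁻ z in Set.Ioo c b,
                    ENNReal.ofReal (|u y - u z| ^ p / |y - z| ^ (1 + s * p)) := by
                apply setLIntegral_mono_ae' measurableSet_Ioo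
                exact Filter.Eventually.of_forall fun y hy => hosc c hac hcb y hy
            _ = ENNReal.ofReal ((b - c) ^ (s * p)) * ∫⁻ y in Set.Ioo c b,
                  ∫⁻ z in Set.Ioo c b,
                    ENNReal.ofReal (|u y - u z| ^ p / |y - z| ^ (1 + s * p)) :=
                lintegral_const_mul' _ _ ENNReal.ofReal_ne_top
            _ ≤ ENNReal.ofReal ((b - c) ^ (s * p)) * ENNReal.ofReal Jr := by
                apply mul_le_mul' le_rfl
                rw [← hJrEq, hJ_def]
                exact lintegral_mono'
                  (Measure.restrict_mono (Set.Ioo_subset_Ioo_left hac) le_rfl)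
                  (fun y => lintegral_mono'
                    (Measure.restrict_mono (Set.Ioo_subset_Ioo_left hac) le_rfl) le_rfl)
      _ = ENNReal.ofReal (1 / (b - c) *
            (2 ^ (p - 1) * ((b - c) ^ (s * p) * Jr + Bd ^ p * (b - c)))) := by
          rw [← ENNReal.ofReal_mul (Real.rpow_nonneg hδ.le _),
            ← ENNReal.ofReal_mul (Real.rpow_nonneg hBd0 _),
            ← ENNReal.ofReal_add (mul_nonneg (Real.rpow_nonneg hδ.le _) hJr0)
              (mul_nonneg (Real.rpow_nonneg hBd0 _) hδ.le),
            ← ENNReal.ofReal_mul h2p.le, ← ENNReal.ofReal_mul (by positivity)]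
      _ ≤ ENNReal.ofReal ((C1 + C2) * (Ir + Jr)) := ENNReal.ofReal_le_ofReal hfinal
      _ = ENNReal.ofReal (C1 + C2) * (I + J) := by
          rw [hIrEq, hJrEq, ← ENNReal.ofReal_add hIr0 hJr0, ← ENNReal.ofReal_mul hCpos.le]
end
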